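/- arXiv:math/0502350 — 7 statements merged into one kernel-verified Lean document; each statement's English description precedes it below -/
import Mathlib

section
/- There are no integers x, y, z with x ≠ 0 and y ≠ 0 such that x^4 + 9·x^2·y^2 + 27·y^4 = z^2. -/
-- helper: coprimality via primes
private lemma aux_coprime (a b : ℤ)
    (h : ∀ p : ℕ, p.Prime → (p:ℤ) ∣ a → (p:ℤ) ∣ b → False) : IsCoprime a b := by
  rw [Int.isCoprime_iff_gcd_eq_one]
  by_contra hg
  obtain ⟨p, pp, pd⟩ := Nat.exists_prime_and_dvd hg
  exact h p pp ((Int.natCast_dvd_natCast.mpr pd).trans (Int.gcd_dvd_left _ _))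
    ((Int.natCast_dvd_natCast.mpr pd).trans (Int.gcd_dvd_right _ _))

-- helper: if coprime positive s*m = y^4 then s is a fourth power
private lemma aux_fourth (s m y : ℤ) (hs : 0 < s) (hco : IsCoprime s m)
    (h : s * m = y ^ 4) : ∃ a : ℤ, s = a ^ 4 := by
  obtain ⟨d, hd⟩ := exists_associated_pow_of_mul_eq_pow
    (hco.isUnit_of_dvd' (gcd_dvd_left _ _) (gcd_dvd_right _ _)) h
  rcases Int.associated_iff.mp hd with h1 | h1
  · exact ⟨d, h1.symm⟩
  · exfalso; nlinarith [sq_nonneg (d^2), sq_nonneg d]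

-- split lemma, asymmetric version: 3 ∣ t
private lemma aux_split' (s t y : ℤ) (hs : 0 < s) (ht : 0 < t)
    (hco : IsCoprime s t) (h : s * t = 27 * y ^ 4) (h3 : (3:ℤ) ∣ t) :
    ∃ a b : ℤ, s = a ^ 4 ∧ t = 27 * b ^ 4 ∧ a ^ 4 * b ^ 4 = y ^ 4 := by
  have hs3 : IsCoprime s 3 := hco.of_isCoprime_of_dvd_right h3
  have hs27 : IsCoprime s 27 := by
    have : IsCoprime s (3^3 : ℤ) := hs3.pow_right
    norm_num at this; exact this
  have hsy : s ∣ y ^ 4 := hs27.dvd_of_dvd_mul_left ⟨t, by linarith [h]⟩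
  obtain ⟨m, hm⟩ := hsy
  have hsne : s ≠ 0 := ne_of_gt hs
  have htm : t = 27 * m := by
    have : s * t = s * (27 * m) := by rw [h, hm]; ring
    exact mul_left_cancel₀ hsne this
  have hmpos : 0 < m := by nlinarith
  have hcosm : IsCoprime s m := hco.of_isCoprime_of_dvd_right ⟨27, by linarith [htm]⟩
  obtain ⟨a, ha⟩ := aux_fourth s m y hs hcosm hm.symm
  obtain ⟨b, hb⟩ := aux_fourth m s y hmpos hcosm.symm (by rw [mul_comm]; exact hm.symm)
  exact ⟨a, b, ha, by rw [htm, hb], by rw [← ha, ← hb, hm]⟩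

private lemma aux_split (s t y : ℤ) (hs : 0 < s) (ht : 0 < t)
    (hco : IsCoprime s t) (h : s * t = 27 * y ^ 4) :
    ∃ a b : ℤ, a ^ 4 * b ^ 4 = y ^ 4 ∧
      ((s = a ^ 4 ∧ t = 27 * b ^ 4) ∨ (s = 27 * b ^ 4 ∧ t = a ^ 4)) := by
  have h3 : (3:ℤ) ∣ s * t := ⟨9 * y ^ 4, by linarith⟩
  rcases Int.prime_three.dvd_mul.mp h3 with h3s | h3t
  · obtain ⟨a, b, h1, h2, h3⟩ := aux_split' t s y ht hs hco.symm (by linarith [h]) h3s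
    exact ⟨a, b, h3, Or.inr ⟨h2, h1⟩⟩
  · obtain ⟨a, b, h1, h2, h3⟩ := aux_split' s t y hs ht hco h h3t
    exact ⟨a, b, h3, Or.inl ⟨h1, h2⟩⟩

-- from a^4 b^4 = y^4 get a^2 b^2 = y^2
private lemma aux_sq (a b y : ℤ) (h : a ^ 4 * b ^ 4 = y ^ 4) : a ^ 2 * b ^ 2 = y ^ 2 := by
  have h2 : (a ^ 2 * b ^ 2 - y ^ 2) * (a ^ 2 * b ^ 2 + y ^ 2) = 0 := by linear_combination h
  rcases mul_eq_zero.mp h2 with h3 | h3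
  · linarith
  · have ha : a ^ 2 * b ^ 2 = 0 := by nlinarith [sq_nonneg (a*b), sq_nonneg y]
    have hy : y ^ 2 = 0 := by nlinarith [sq_nonneg (a*b), sq_nonneg y]
    rw [ha, hy]

private lemma aux_ending (u v b : ℤ) (hu : 0 < u) (hv : 0 < v)
    (hco : IsCoprime u v) (huv : u * v = 27 * b ^ 4) :
    ∃ c e : ℤ, c ≠ 0 ∧ e ≠ 0 ∧ u + v = c ^ 4 + 27 * e ^ 4 ∧ c ^ 2 * e ^ 2 = b ^ 2 := by
  obtain ⟨c, e, hce, hcase⟩ := aux_split u v b hu hv hco huv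
  have hsq := aux_sq c e b hce
  have hc : c ≠ 0 := by
    rintro rfl
    rcases hcase with ⟨h1, h2⟩ | ⟨h1, h2⟩ <;> simp_all <;> nlinarith
  have he : e ≠ 0 := by
    rintro rfl
    rcases hcase with ⟨h1, h2⟩ | ⟨h1, h2⟩ <;> simp_all <;> nlinarith
  rcases hcase with ⟨h1, h2⟩ | ⟨h1, h2⟩
  · exact ⟨c, e, hc, he, by rw [h1, h2], hsq⟩
  · exact ⟨c, e, hc, he, by rw [h1, h2]; ring, hsq⟩

private lemma aux_p27 (p : ℕ) (pp : p.Prime) (b : ℤ) (h : (p:ℤ) ∣ 27 * b ^ 4) :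
    p = 3 ∨ (p:ℤ) ∣ b := by
  have pp' : Prime (p:ℤ) := Nat.prime_iff_prime_int.mp pp
  rcases pp'.dvd_mul.mp h with h1 | h1
  · left
    have h2 : (p:ℤ) ∣ (3:ℤ) ^ 3 := by norm_num at h1 ⊢; exact h1
    have h3 : (p:ℤ) ∣ (3:ℤ) := pp'.dvd_of_dvd_pow h2
    have h4 : p ∣ 3 := by exact_mod_cast h3
    exact (Nat.prime_dvd_prime_iff_eq pp Nat.prime_three).mp h4
  · right; exact pp'.dvd_of_dvd_pow h1

private lemma aux_punit (p : ℕ) (pp : p.Prime) {x y : ℤ} (hco : IsCoprime x y)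
    (hx : (p:ℤ) ∣ x) (hy : (p:ℤ) ∣ y) : False := by
  have hu := hco.isUnit_of_dvd' hx hy
  have h0 : (0:ℤ) ≤ (p:ℤ) := Int.natCast_nonneg p
  rcases Int.isUnit_iff.mp hu with h | h
  · have : p = 1 := by exact_mod_cast h
    exact pp.one_lt.ne' this
  · omega

private lemma aux_natAbs_sq (a b : ℤ) (h : a ^ 2 = b ^ 2) : a.natAbs = b.natAbs := by
  have h1 : a.natAbs ^ 2 = b.natAbs ^ 2 := by
    have h2 := congrArg Int.natAbs h
    rwa [Int.natAbs_pow, Int.natAbs_pow] at h2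
  exact Nat.pow_left_injective (by norm_num) h1

private lemma aux_pow4_pos (b : ℤ) (hb : b ≠ 0) : 0 < b ^ 4 :=
  lt_of_le_of_ne (by positivity) (Ne.symm (pow_ne_zero 4 hb))

private lemma aux_natAbs_pow4 (a : ℤ) : ((a.natAbs : ℤ)) ^ 4 = a ^ 4 := by
  have h2 : (0:ℤ) ≤ a ^ 4 := by positivity
  calc ((a.natAbs:ℤ)) ^ 4 = ((a.natAbs ^ 4 : ℕ) : ℤ) := by push_cast; ring
    _ = (((a ^ 4).natAbs : ℕ) : ℤ) := by rw [Int.natAbs_pow]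
    _ = a ^ 4 := Int.natAbs_of_nonneg h2

set_option maxHeartbeats 1000000 in
private lemma main_descent : ∀ n : ℕ, ∀ x y z : ℤ, y.natAbs ≤ n → x ≠ 0 → y ≠ 0 →
    x ^ 4 + 9 * x ^ 2 * y ^ 2 + 27 * y ^ 4 = z ^ 2 → False := by
  intro n
  induction n using Nat.strong_induction_on with
  | _ n IH =>
  intro x y z hyn hx hy heq0
  -- z ≠ 0 and WLOG 0 < z
  have hx4 : 0 < x ^ 4 := aux_pow4_pos x hx
  have hy4 : 0 < y ^ 4 := aux_pow4_pos y hy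
  have hz0 : z ≠ 0 := by
    rintro rfl
    nlinarith [sq_nonneg x, sq_nonneg y, sq_nonneg (x*y)]
  obtain ⟨z', hz'pos, heq⟩ : ∃ z' : ℤ, 0 < z' ∧ x ^ 4 + 9 * x ^ 2 * y ^ 2 + 27 * y ^ 4 = z' ^ 2 :=
    ⟨|z|, abs_pos.mpr hz0, by rw [sq_abs]; exact heq0⟩
  clear heq0 hz0 z
  -- reduce to the coprime case
  by_cases hg : Int.gcd x y = 1
  case neg =>
    have hgne : Int.gcd x y ≠ 0 := fun h => hx (Int.gcd_eq_zero_iff.mp h).1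
    obtain ⟨x1, hx1⟩ : ((Int.gcd x y : ℤ)) ∣ x := Int.gcd_dvd_left x y
    obtain ⟨y1, hy1⟩ : ((Int.gcd x y : ℤ)) ∣ y := Int.gcd_dvd_right x y
    set g : ℤ := (Int.gcd x y : ℤ) with hgdef
    have hgne' : g ≠ 0 := by simpa [hgdef] using hgne
    rw [hx1, hy1] at heq
    have hzdvd : g ^ 2 ∣ z' := by
      rw [← Int.pow_dvd_pow_iff (two_ne_zero)]
      exact ⟨x1 ^ 4 + 9 * x1 ^ 2 * y1 ^ 2 + 27 * y1 ^ 4, by linear_combination -heq⟩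
    obtain ⟨z1, hz1⟩ := hzdvd
    have heq1 : x1 ^ 4 + 9 * x1 ^ 2 * y1 ^ 2 + 27 * y1 ^ 4 = z1 ^ 2 := by
      have h4 : g ^ 4 * (x1 ^ 4 + 9 * x1 ^ 2 * y1 ^ 2 + 27 * y1 ^ 4) = g ^ 4 * z1 ^ 2 := by
        rw [hz1] at heq; linear_combination heq
      exact mul_left_cancel₀ (pow_ne_zero 4 hgne') h4
    have hx1ne : x1 ≠ 0 := by rintro rfl; simp at hx1; exact hx hx1
    have hy1ne : y1 ≠ 0 := by rintro rfl; simp at hy1; exact hy hy1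
    have hsize : y1.natAbs < n := by
      have h1 : y.natAbs = g.natAbs * y1.natAbs := by rw [hy1, Int.natAbs_mul]
      have h2 : g.natAbs = Int.gcd x y := by simp [hgdef]
      have h3 : y1.natAbs ≠ 0 := Int.natAbs_ne_zero.mpr hy1ne
      have h6 : 2 ≤ g.natAbs := by
        have h4 : Int.gcd x y ≠ 1 := hg
        have h5 : Int.gcd x y ≠ 0 := hgne
        omega
      have h7 : 2 * y1.natAbs ≤ g.natAbs * y1.natAbs := Nat.mul_le_mul_right _ h6
      omega
    exact IH y1.natAbs hsize x1 y1 z1 le_rfl hx1ne hy1ne heq1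
  case pos =>
  have hco : IsCoprime x y := Int.isCoprime_iff_gcd_eq_one.mpr hg
  -- 3 ∤ x
  have h3x : ¬ (3:ℤ) ∣ x := by
    rintro ⟨x1, hx1⟩
    have hdz : (3:ℤ) ∣ z' ^ 2 :=
      ⟨27 * x1 ^ 4 + 27 * x1 ^ 2 * y ^ 2 + 9 * y ^ 4, by rw [hx1] at heq; linear_combination -heq⟩
    obtain ⟨z1, hz1⟩ := Int.prime_three.dvd_of_dvd_pow hdz
    have h2 : z1 ^ 2 = 9 * x1 ^ 4 + 9 * x1 ^ 2 * y ^ 2 + 3 * y ^ 4 := by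
      have h9 : (9:ℤ) * z1 ^ 2 = 9 * (9 * x1 ^ 4 + 9 * x1 ^ 2 * y ^ 2 + 3 * y ^ 4) := by
        rw [hx1, hz1] at heq; linear_combination -heq
      exact mul_left_cancel₀ (by norm_num) h9
    have hdz1 : (3:ℤ) ∣ z1 ^ 2 := ⟨3 * x1 ^ 4 + 3 * x1 ^ 2 * y ^ 2 + y ^ 4, by linarith⟩
    obtain ⟨z2, hz2⟩ := Int.prime_three.dvd_of_dvd_pow hdz1
    have h3 : y ^ 4 = 3 * (z2 ^ 2 - x1 ^ 4 - x1 ^ 2 * y ^ 2) := by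
      rw [hz2] at h2; linarith [h2]
    have hdy : (3:ℤ) ∣ y := Int.prime_three.dvd_of_dvd_pow (n := 4) ⟨_, h3⟩
    exact aux_punit 3 Nat.prime_three hco ⟨x1, hx1⟩ hdy
  -- 3 ∤ z'
  have h3z : ¬ (3:ℤ) ∣ z' := by
    rintro ⟨z1, hz1⟩
    refine h3x (Int.prime_three.dvd_of_dvd_pow (n := 4) ⟨3 * z1 ^ 2 - 3 * x ^ 2 * y ^ 2 - 9 * y ^ 4, ?_⟩)
    rw [hz1] at heq; linear_combination heq
  rcases Int.even_or_odd y with ⟨w, hw⟩ | ⟨w, hw⟩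
  · -- y even
    subst hw
    have hwne : w ≠ 0 := by rintro rfl; norm_num at hy
    have hxodd : Odd x := by
      rcases Int.even_or_odd x with ⟨ξ, hξ⟩ | h
      · exact absurd (aux_punit 2 Nat.prime_two hco ⟨ξ, by rw [hξ]; push_cast; ring⟩
          ⟨w, by push_cast; ring⟩) (fun f => f)
      · exact h
    obtain ⟨ξ, hξ⟩ := hxodd
    have hz2odd : Odd (z'^2) := by
      rw [← heq]
      exact ⟨8*ξ^4+16*ξ^3+12*ξ^2+4*ξ+72*ξ^2*w^2+72*ξ*w^2+18*w^2+216*w^4, by rw [hξ]; ring⟩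
    have hz'odd : Odd z' := by
      rcases Int.even_or_odd z' with ⟨ζ, hζ⟩ | h
      · exfalso
        have hev : Even (z'^2) := ⟨2*ζ^2, by rw [hζ]; ring⟩
        exact (Int.not_odd_iff_even.mpr hev) hz2odd
      · exact h
    obtain ⟨ζ, hζ⟩ := hz'odd
    obtain ⟨r, hr⟩ : ∃ r, z' = x^2 + 2*r := ⟨ζ - 2*ξ^2 - 2*ξ, by rw [hζ, hξ]; ring⟩
    subst hr
    have hst4 : 4*((r - 9*w^2)*(x^2 + r + 9*w^2)) = 4*(27*w^4) := by linear_combination -heq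
    have hst : (r - 9*w^2)*(x^2 + r + 9*w^2) = 27*w^4 := by linarith
    have htpos : 0 < x^2 + r + 9*w^2 := by linarith [hz'pos, sq_nonneg x, sq_nonneg w]
    have h27w : 0 < 27*w^4 := by linarith [aux_pow4_pos w hwne]
    have hspos : 0 < r - 9*w^2 := by
      by_contra hcon
      push_neg at hcon
      linarith [mul_nonpos_of_nonpos_of_nonneg hcon (le_of_lt htpos), hst, h27w]
    have hcost : IsCoprime (r - 9*w^2) (x^2 + r + 9*w^2) := by
      apply aux_coprime
      intro p pp hps hpt
      have pp' : Prime (p:ℤ) := Nat.prime_iff_prime_int.mp pp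
      have hp27 : (p:ℤ) ∣ 27*w^4 := hps.trans ⟨_, hst.symm⟩
      obtain ⟨k1, e1⟩ := hps
      obtain ⟨k2, e2⟩ := hpt
      rcases aux_p27 p pp w hp27 with rfl | hpw
      · apply h3z
        have hd : ((3:ℕ):ℤ) ∣ (x^2+2*r) := ⟨k1+k2, by linarith⟩
        exact_mod_cast hd
      · obtain ⟨q, hq⟩ := hpw
        have hpx2 : (p:ℤ) ∣ x^2 :=
          ⟨k2 - k1 - 18*(p:ℤ)*q^2, by linear_combination e2 - e1 - 18*(w+(p:ℤ)*q)*hq⟩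
        have hpx : (p:ℤ) ∣ x := pp'.dvd_of_dvd_pow hpx2
        exact aux_punit p pp hco hpx ⟨2*q, by rw [hq]; ring⟩
    obtain ⟨a, b, hab4, hcase⟩ := aux_split _ _ _ hspos htpos hcost hst
    have hw2 : a^2*b^2 = w^2 := aux_sq _ _ _ hab4
    rcases hcase with ⟨hsa, htb⟩ | ⟨hsb, hta⟩
    · -- subcase i : impossible mod 4
      have h1 : 27*b^4 - a^4 = x^2 + 18*w^2 := by rw [← hsa, ← htb]; ring
      have hkey : (a^2+9*b^2)^2 + x^2 = 108*b^4 := by linear_combination -h1 + 18*hw2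
      have hdec : ∀ K X B : ZMod 4, K^2 + (2*X+1)^2 ≠ 108*B^4 := by decide
      rw [hξ] at hkey
      have hcast := congrArg (fun q : ℤ => (q : ZMod 4)) hkey
      push_cast at hcast
      exact hdec _ _ _ hcast
    · -- subcase ii : descent
      have hbne : b ≠ 0 := by
        rintro rfl
        rw [hsb] at hspos
        norm_num at hspos
      have hb4 : 0 < b^4 := aux_pow4_pos b hbne
      have h1 : a^4 - 27*b^4 = x^2 + 18*w^2 := by rw [← hsb, ← hta]; ring
      have hN : (a^2-9*b^2)^2 = x^2 + 108*b^4 := by linear_combination h1 - 18*hw2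
      have hMnn : 0 ≤ |a^2-9*b^2| := abs_nonneg _
      have hMsq : |a^2-9*b^2|^2 = x^2 + 108*b^4 := by rw [sq_abs]; exact hN
      have hModd : Odd (|a^2-9*b^2|) := by
        rcases Int.even_or_odd (|a^2-9*b^2|) with ⟨κ, hκ⟩ | h
        · exfalso
          have hev : Even (|a^2-9*b^2|^2) := ⟨2*κ^2, by rw [hκ]; ring⟩
          have hodd2 : Odd (|a^2-9*b^2|^2) := by
            rw [hMsq, hξ]
            exact ⟨2*ξ^2+2*ξ+54*b^4, by ring⟩
          exact (Int.not_odd_iff_even.mpr hev) hodd2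
        · exact h
      obtain ⟨μ, hμ⟩ := hModd
      have hxlt : -|a^2-9*b^2| < x ∧ x < |a^2-9*b^2| := by
        have hsq : x^2 < |a^2-9*b^2|^2 := by linarith
        exact abs_lt_of_sq_lt_sq' hsq hMnn
      have hupos : 0 < μ - ξ := by
        have h2 := hxlt.2
        rw [hμ, hξ] at h2
        linarith
      have hvpos : 0 < μ + ξ + 1 := by
        have h2 := hxlt.1
        rw [hμ, hξ] at h2
        linarith
      rw [hμ, hξ] at hMsq
      have huv4 : 4*((μ - ξ)*(μ + ξ + 1)) = 4*(27*b^4) := by linear_combination hMsq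
      have huv : (μ - ξ)*(μ + ξ + 1) = 27*b^4 := by linarith
      have hcouv : IsCoprime (μ - ξ) (μ + ξ + 1) := by
        apply aux_coprime
        intro p pp hpu hpv
        have pp' : Prime (p:ℤ) := Nat.prime_iff_prime_int.mp pp
        have hp27 : (p:ℤ) ∣ 27*b^4 := hpu.trans ⟨_, huv.symm⟩
        obtain ⟨k1, e1⟩ := hpu
        obtain ⟨k2, e2⟩ := hpv
        have hpx : (p:ℤ) ∣ x := ⟨k2 - k1, by rw [hξ]; linarith [e1, e2]⟩
        rcases aux_p27 p pp b hp27 with rfl | hpb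
        · apply h3x
          exact_mod_cast hpx
        · have hpw' : (p:ℤ) ∣ w := by
            have hdd : (p:ℤ) ∣ w^2 := by
              rw [← hw2]
              exact hpb.trans ⟨a^2*b, by ring⟩
            exact pp'.dvd_of_dvd_pow hdd
          obtain ⟨q, hq⟩ := hpw'
          exact aux_punit p pp hco hpx ⟨2*q, by rw [hq]; ring⟩
      obtain ⟨c, e, hc, he, hsum, hce2⟩ := aux_ending _ _ b hupos hvpos hcouv huv
      have h2M : 2*μ+1 = c^4 + 27*e^4 := by linarith [hsum]
      have he4 : 0 < e^4 := aux_pow4_pos e he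
      rcases abs_cases (a^2-9*b^2) with ⟨hM1, _⟩ | ⟨hM1, _⟩
      · have hfinal : c^4 + 9*c^2*e^2 + 27*e^4 = a^2 := by
          linear_combination -h2M - hμ + hM1 + 9*hce2
        have hane : a ≠ 0 := by
          rintro rfl
          rw [hta] at htpos
          norm_num at htpos
        have hyab : a.natAbs * b.natAbs = w.natAbs := by
          have h := aux_natAbs_sq (a*b) w (by linear_combination hw2)
          rwa [Int.natAbs_mul] at h
        have hbce : c.natAbs * e.natAbs = b.natAbs := by
          have h := aux_natAbs_sq (c*e) b (by linear_combination hce2)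
          rwa [Int.natAbs_mul] at h
        have hcne : c.natAbs ≠ 0 := Int.natAbs_ne_zero.mpr hc
        have hene : e.natAbs ≠ 0 := Int.natAbs_ne_zero.mpr he
        have hbneN : b.natAbs ≠ 0 := Int.natAbs_ne_zero.mpr hbne
        have haneN : a.natAbs ≠ 0 := Int.natAbs_ne_zero.mpr hane
        have hsize : e.natAbs < n := by
          have hww : (w+w).natAbs = 2*w.natAbs := by
            have h2 : w+w = 2*w := by ring
            rw [h2, Int.natAbs_mul]
            rfl
          have h5 : 1*e.natAbs ≤ c.natAbs*e.natAbs := Nat.mul_le_mul_right _ (by omega)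
          have h6 : 1*b.natAbs ≤ a.natAbs*b.natAbs := Nat.mul_le_mul_right _ (by omega)
          omega
        exact IH e.natAbs hsize c e a le_rfl hc he hfinal
      · have hbad : a^2 = 9*c^2*e^2 - c^4 - 27*e^4 := by
          linear_combination hM1 - hμ - h2M - 9*hce2
        have hexp : (2*c^2-9*e^2)^2 = 4*c^4 - 36*c^2*e^2 + 81*e^4 := by ring
        linarith [hexp, sq_nonneg (2*c^2-9*e^2), sq_nonneg a, he4, hbad]
  · -- y odd
    subst hw
    have hst : (2*z' - 2*x^2 - 9*(2*w+1)^2) * (2*z' + 2*x^2 + 9*(2*w+1)^2)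
        = 27*(2*w+1)^4 := by linear_combination (-4:ℤ)*heq
    have htpos : 0 < 2*z' + 2*x^2 + 9*(2*w+1)^2 := by
      linarith [sq_nonneg x, sq_nonneg (2*w+1)]
    have h27y : 0 < 27*(2*w+1)^4 := by linarith [aux_pow4_pos (2*w+1) hy]
    have hspos : 0 < 2*z' - 2*x^2 - 9*(2*w+1)^2 := by
      by_contra hcon
      push_neg at hcon
      linarith [mul_nonpos_of_nonpos_of_nonneg hcon (le_of_lt htpos), hst, h27y]
    have hsodd : Odd (2*z' - 2*x^2 - 9*(2*w+1)^2) :=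
      ⟨z' - x^2 - 18*w^2 - 18*w - 5, by ring⟩
    have htodd : Odd (2*z' + 2*x^2 + 9*(2*w+1)^2) :=
      ⟨z' + x^2 + 18*w^2 + 18*w + 4, by ring⟩
    have hcost : IsCoprime (2*z' - 2*x^2 - 9*(2*w+1)^2) (2*z' + 2*x^2 + 9*(2*w+1)^2) := by
      apply aux_coprime
      intro p pp hps hpt
      have pp' : Prime (p:ℤ) := Nat.prime_iff_prime_int.mp pp
      have hp2 : p ≠ 2 := by
        rintro rfl
        obtain ⟨k, hk⟩ := hps
        obtain ⟨j, hj⟩ := hsodd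
        push_cast at hk
        have : 2*k = 2*j+1 := by linarith [hk, hj]
        omega
      have hp27 : (p:ℤ) ∣ 27*(2*w+1)^4 := hps.trans ⟨_, hst.symm⟩
      obtain ⟨k1, e1⟩ := hps
      obtain ⟨k2, e2⟩ := hpt
      rcases aux_p27 p pp _ hp27 with rfl | hpy
      · apply h3z
        have h4z : ((3:ℕ):ℤ) ∣ 4*z' := ⟨k1+k2, by linarith⟩
        have h4z' : (3:ℤ) ∣ 4*z' := by exact_mod_cast h4z
        rcases Int.prime_three.dvd_mul.mp h4z' with h | h
        · norm_num at h
        · exact h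
      · obtain ⟨q, hq⟩ := hpy
        have hpx2 : (p:ℤ) ∣ 4*x^2 :=
          ⟨k2 - k1 - 18*(p:ℤ)*q^2, by linear_combination e2 - e1 - 18*(2*w+1+(p:ℤ)*q)*hq⟩
        rcases pp'.dvd_mul.mp hpx2 with h | h
        · exfalso
          have h2' : (p:ℤ) ∣ (2:ℤ)^2 := by norm_num at h ⊢; exact h
          have h2'' : (p:ℤ) ∣ (2:ℤ) := pp'.dvd_of_dvd_pow h2'
          have : p ∣ 2 := by exact_mod_cast h2''
          exact hp2 ((Nat.prime_dvd_prime_iff_eq pp Nat.prime_two).mp this)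
        · exact aux_punit p pp hco (pp'.dvd_of_dvd_pow h) ⟨q, hq⟩
    obtain ⟨a, b, hab4, hcase⟩ := aux_split _ _ _ hspos htpos hcost hst
    have hy2 : a^2*b^2 = (2*w+1)^2 := aux_sq _ _ _ hab4
    have haodd : Odd a := by
      rcases Int.even_or_odd a with ⟨α, hα⟩ | h
      · exfalso
        have heva : Even (a^4) := ⟨8*α^4, by rw [hα]; ring⟩
        rcases hcase with ⟨hsa, htb⟩ | ⟨hsb, hta⟩
        · rw [← hsa] at heva; exact (Int.not_odd_iff_even.mpr heva) hsodd
        · rw [← hta] at heva; exact (Int.not_odd_iff_even.mpr heva) htodd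
      · exact h
    have hbodd : Odd b := by
      rcases Int.even_or_odd b with ⟨β, hβ⟩ | h
      · exfalso
        have hevb : Even (27*b^4) := ⟨216*β^4, by rw [hβ]; ring⟩
        rcases hcase with ⟨hsa, htb⟩ | ⟨hsb, hta⟩
        · rw [← htb] at hevb; exact (Int.not_odd_iff_even.mpr hevb) htodd
        · rw [← hsb] at hevb; exact (Int.not_odd_iff_even.mpr hevb) hsodd
      · exact h
    obtain ⟨α, hα⟩ := haodd
    obtain ⟨β, hβ⟩ := hbodd
    rcases hcase with ⟨hsa, htb⟩ | ⟨hsb, hta⟩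
    · -- subcase i : impossible mod 4
      have h1 : 27*b^4 - a^4 = 4*x^2 + 18*(2*w+1)^2 := by rw [← hsa, ← htb]; ring
      have hkey : (a^2+9*b^2)^2 + 4*x^2 = 108*b^4 := by linear_combination -h1 + 18*hy2
      have hfin4 : 4*((2*(α^2+α+9*β^2+9*β+2)+1)^2 + x^2) = 4*(27*(2*β+1)^4) := by
        rw [hα, hβ] at hkey; linear_combination hkey
      have hfin : (2*(α^2+α+9*β^2+9*β+2)+1)^2 + x^2 = 27*(2*β+1)^4 := by linarith
      have hdec : ∀ M X B : ZMod 4, (2*M+1)^2 + X^2 ≠ 27*(2*B+1)^4 := by decide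
      have hcast := congrArg (fun q : ℤ => (q : ZMod 4)) hfin
      push_cast at hcast
      exact hdec _ _ _ hcast
    · -- subcase ii : descent
      have hbne : b ≠ 0 := by
        rintro rfl
        rw [hsb] at hspos
        norm_num at hspos
      have hb4 : 0 < b^4 := aux_pow4_pos b hbne
      have h1 : a^4 - 27*b^4 = 4*x^2 + 18*(2*w+1)^2 := by rw [← hsb, ← hta]; ring
      have hN : (a^2-9*b^2)^2 = 4*x^2 + 108*b^4 := by linear_combination h1 - 18*hy2
      obtain ⟨m, hmdef⟩ : ∃ m, a^2 - 9*b^2 = 2*m :=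
        ⟨2*α^2+2*α-18*β^2-18*β-4, by rw [hα, hβ]; ring⟩
      have h4m : 4*(m^2) = 4*(x^2 + 27*b^4) := by
        linear_combination hN - (a^2-9*b^2+2*m)*hmdef
      have hmsq : m^2 = x^2 + 27*b^4 := by linarith
      have hMnn : 0 ≤ |m| := abs_nonneg m
      have hMsq : |m|^2 = x^2 + 27*b^4 := by rw [sq_abs]; exact hmsq
      have hxlt : -|m| < x ∧ x < |m| := by
        have hsq : x^2 < |m|^2 := by linarith
        exact abs_lt_of_sq_lt_sq' hsq hMnn
      have hupos : 0 < |m| - x := by linarith [hxlt.2]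
      have hvpos : 0 < |m| + x := by linarith [hxlt.1]
      have huv : (|m| - x)*(|m| + x) = 27*b^4 := by linear_combination hMsq
      have hoddprod : Odd ((|m|-x)*(|m|+x)) := by
        rw [huv, hβ]; exact ⟨216*β^4+432*β^3+324*β^2+108*β+13, by ring⟩
      have huodd : Odd (|m| - x) := by
        rcases Int.even_or_odd (|m|-x) with ⟨κ, hκ⟩ | h
        · exfalso
          have hev : Even ((|m|-x)*(|m|+x)) := ⟨κ*(|m|+x), by rw [hκ]; ring⟩
          exact (Int.not_odd_iff_even.mpr hev) hoddprod
        · exact h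
      have hcouv : IsCoprime (|m| - x) (|m| + x) := by
        apply aux_coprime
        intro p pp hpu hpv
        have pp' : Prime (p:ℤ) := Nat.prime_iff_prime_int.mp pp
        have hp2 : p ≠ 2 := by
          rintro rfl
          obtain ⟨k, hk⟩ := hpu
          obtain ⟨j, hj⟩ := huodd
          push_cast at hk
          have : 2*k = 2*j+1 := by linarith [hk, hj]
          omega
        have hp27 : (p:ℤ) ∣ 27*b^4 := hpu.trans ⟨_, huv.symm⟩
        obtain ⟨k1, e1⟩ := hpu
        obtain ⟨k2, e2⟩ := hpv
        have hpnot2 : ¬ ((p:ℤ) ∣ (2:ℤ)) := by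
          intro h2''
          have : p ∣ 2 := by exact_mod_cast h2''
          exact hp2 ((Nat.prime_dvd_prime_iff_eq pp Nat.prime_two).mp this)
        have hpx : (p:ℤ) ∣ x := by
          have hpx2 : (p:ℤ) ∣ 2*x := ⟨k2-k1, by linarith⟩
          rcases pp'.dvd_mul.mp hpx2 with h | h
          · exact absurd h hpnot2
          · exact h
        rcases aux_p27 p pp b hp27 with rfl | hpb
        · apply h3x
          have : ((3:ℕ):ℤ) ∣ x := hpx
          exact_mod_cast this
        · have hpy : (p:ℤ) ∣ (2*w+1) := by
            have hdd : (p:ℤ) ∣ (2*w+1)^2 := by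
              rw [← hy2]
              exact hpb.trans ⟨a^2*b, by ring⟩
            exact pp'.dvd_of_dvd_pow hdd
          exact aux_punit p pp hco hpx hpy
      obtain ⟨c, e, hc, he, hsum, hce2⟩ := aux_ending _ _ b hupos hvpos hcouv huv
      have h2M : 2*|m| = c^4 + 27*e^4 := by linarith [hsum]
      have he4 : 0 < e^4 := aux_pow4_pos e he
      rcases abs_cases m with ⟨hM1, _⟩ | ⟨hM1, _⟩
      · -- descent
        have hfinal : c^4 + 9*c^2*e^2 + 27*e^4 = a^2 := by
          linear_combination -h2M + 2*hM1 - hmdef + 9*hce2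
        have h27lt : 27*b^4 < a^4 := by
          have hx2 : 0 < x^2 := lt_of_le_of_ne (sq_nonneg x) (Ne.symm (pow_ne_zero 2 hx))
          linarith [h1, hx2, sq_nonneg (2*w+1)]
        have ha2 : 2 ≤ a.natAbs := by
          by_contra hcon
          push_neg at hcon
          have h1b : 1 ≤ b^4 := by linarith [Int.lt_iff_add_one_le.mp hb4]
          have hcases : a = 0 ∨ a = 1 ∨ a = -1 := by omega
          rcases hcases with rfl | rfl | rfl <;> norm_num at h27lt <;> linarith
        have hyab : a.natAbs * b.natAbs = (2*w+1).natAbs := by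
          have h := aux_natAbs_sq (a*b) (2*w+1) (by linear_combination hy2)
          rwa [Int.natAbs_mul] at h
        have hbce : c.natAbs * e.natAbs = b.natAbs := by
          have h := aux_natAbs_sq (c*e) b (by linear_combination hce2)
          rwa [Int.natAbs_mul] at h
        have hcne : c.natAbs ≠ 0 := Int.natAbs_ne_zero.mpr hc
        have hene : e.natAbs ≠ 0 := Int.natAbs_ne_zero.mpr he
        have hbneN : b.natAbs ≠ 0 := Int.natAbs_ne_zero.mpr hbne
        have hsize : e.natAbs < n := by
          have h5 : 1*e.natAbs ≤ c.natAbs*e.natAbs := Nat.mul_le_mul_right _ (by omega)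
          have h6 : 2*b.natAbs ≤ a.natAbs*b.natAbs := Nat.mul_le_mul_right _ ha2
          omega
        exact IH e.natAbs hsize c e a le_rfl hc he hfinal
      · -- impossible sign
        have hbad : a^2 = 9*c^2*e^2 - c^4 - 27*e^4 := by
          linear_combination hmdef - 9*hce2 + 2*hM1 - h2M
        have hexp : (2*c^2-9*e^2)^2 = 4*c^4 - 36*c^2*e^2 + 81*e^4 := by ring
        linarith [hexp, sq_nonneg (2*c^2-9*e^2), sq_nonneg a, he4, hbad]


/-- The equation `x ^ 4 + 9 x ^ 2 y ^ 2 + 27 y ^ 4 = z ^ 2` has no integer solutions with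
`x ≠ 0` and `y ≠ 0`. -/
theorem no_solution_quartic :
    ¬ ∃ x y z : ℤ, x ≠ 0 ∧ y ≠ 0 ∧ x ^ 4 + 9 * x ^ 2 * y ^ 2 + 27 * y ^ 4 = z ^ 2 := by
  rintro ⟨x, y, z, hx, hy, heq⟩
  exact main_descent y.natAbs x y z le_rfl hx hy heq
end

section
/- If x, y, z are integers with x^3 + y^3 = 2·z^3 and x ≠ y, then z = 0. -/
/-- Eisenstein integers `a + b ω` where `ω² + ω + 1 = 0`. -/
@[ext]
structure Eis where
  re : ℤ
  im : ℤ
  deriving DecidableEq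

namespace Eis

instance : Zero Eis := ⟨⟨0, 0⟩⟩
instance : One Eis := ⟨⟨1, 0⟩⟩
instance : Add Eis := ⟨fun z w => ⟨z.re + w.re, z.im + w.im⟩⟩
instance : Neg Eis := ⟨fun z => ⟨-z.re, -z.im⟩⟩
instance : Mul Eis := ⟨fun z w =>
  ⟨z.re * w.re - z.im * w.im, z.re * w.im + z.im * w.re - z.im * w.im⟩⟩

@[simp] theorem zero_re : (0 : Eis).re = 0 := rfl
@[simp] theorem zero_im : (0 : Eis).im = 0 := rfl
@[simp] theorem one_re : (1 : Eis).re = 1 := rfl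
@[simp] theorem one_im : (1 : Eis).im = 0 := rfl
@[simp] theorem add_re (z w : Eis) : (z + w).re = z.re + w.re := rfl
@[simp] theorem add_im (z w : Eis) : (z + w).im = z.im + w.im := rfl
@[simp] theorem neg_re (z : Eis) : (-z).re = -z.re := rfl
@[simp] theorem neg_im (z : Eis) : (-z).im = -z.im := rfl
@[simp] theorem mul_re (z w : Eis) : (z * w).re = z.re * w.re - z.im * w.im := rfl
@[simp] theorem mul_im (z w : Eis) :
    (z * w).im = z.re * w.im + z.im * w.re - z.im * w.im := rfl

instance addCommGroup : AddCommGroup Eis := by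
  refine
  { add := (· + ·)
    zero := (0 : Eis)
    sub := fun a b => a + -b
    neg := Neg.neg
    nsmul := @nsmulRec Eis ⟨0⟩ ⟨(· + ·)⟩
    zsmul := @zsmulRec Eis ⟨0⟩ ⟨(· + ·)⟩ ⟨Neg.neg⟩ (@nsmulRec Eis ⟨0⟩ ⟨(· + ·)⟩)
    add_assoc := ?_
    zero_add := ?_
    add_zero := ?_
    neg_add_cancel := ?_
    add_comm := ?_ } <;>
  intros <;> ext <;> simp <;> ring

@[simp] theorem sub_re (z w : Eis) : (z - w).re = z.re - w.re := rfl
@[simp] theorem sub_im (z w : Eis) : (z - w).im = z.im - w.im := rfl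

instance addGroupWithOne : AddGroupWithOne Eis :=
  { Eis.addCommGroup with
    natCast := fun n => ⟨n, 0⟩
    intCast := fun n => ⟨n, 0⟩
    one := 1 }

instance commRing : CommRing Eis := by
  refine
  { Eis.addGroupWithOne with
    mul := (· * ·)
    npow := @npowRec Eis ⟨1⟩ ⟨(· * ·)⟩,
    add_comm := ?_
    left_distrib := ?_
    right_distrib := ?_
    zero_mul := ?_
    mul_zero := ?_
    mul_assoc := ?_
    one_mul := ?_
    mul_one := ?_
    mul_comm := ?_ } <;>
  intros <;> ext <;> simp <;> ring

@[simp] theorem intCast_re (n : ℤ) : (n : Eis).re = n := rfl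
@[simp] theorem intCast_im (n : ℤ) : (n : Eis).im = 0 := rfl

instance : Nontrivial Eis := ⟨⟨0, 1, by decide⟩⟩

/-- conjugation -/
def conj (z : Eis) : Eis := ⟨z.re - z.im, -z.im⟩

@[simp] theorem conj_re (z : Eis) : (conj z).re = z.re - z.im := rfl
@[simp] theorem conj_im (z : Eis) : (conj z).im = -z.im := rfl

/-- the norm -/
def norm (z : Eis) : ℤ := z.re ^ 2 - z.re * z.im + z.im ^ 2

theorem norm_mul (z w : Eis) : norm (z * w) = norm z * norm w := by
  simp [norm]; ring

theorem norm_nonneg (z : Eis) : 0 ≤ norm z := by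
  have : 4 * norm z = (2 * z.re - z.im) ^ 2 + 3 * z.im ^ 2 := by simp [norm]; ring
  nlinarith [sq_nonneg (2 * z.re - z.im), sq_nonneg z.im]

theorem norm_eq_zero_iff {z : Eis} : norm z = 0 ↔ z = 0 := by
  constructor
  · intro h
    have h4 : (2 * z.re - z.im) ^ 2 + 3 * z.im ^ 2 = 0 := by
      simp only [norm] at h; nlinarith
    have him : z.im = 0 := by nlinarith [sq_nonneg (2 * z.re - z.im), sq_nonneg z.im]
    have hre : z.re = 0 := by nlinarith [sq_nonneg (2 * z.re - z.im)]
    ext <;> simp [hre, him]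
  · rintro rfl; simp [norm]

theorem norm_pos {z : Eis} (hz : z ≠ 0) : 0 < norm z :=
  lt_of_le_of_ne (norm_nonneg z) (fun h => hz (norm_eq_zero_iff.mp h.symm))

theorem mul_conj (z : Eis) : z * conj z = (norm z : Eis) := by
  ext <;> simp only [mul_re, mul_im, conj_re, conj_im, intCast_re, intCast_im, norm] <;> ring

instance : Div Eis :=
  ⟨fun x y =>
    let d := norm y
    let c := x * conj y
    ⟨round ((c.re : ℚ) / (d : ℚ)), round ((c.im : ℚ) / (d : ℚ))⟩⟩

theorem div_def (x y : Eis) : x / y =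
    ⟨round (((x * conj y).re : ℚ) / ((norm y : ℤ) : ℚ)),
     round (((x * conj y).im : ℚ) / ((norm y : ℤ) : ℚ))⟩ := rfl

instance : Mod Eis := ⟨fun x y => x - y * (x / y)⟩

theorem mod_def (x y : Eis) : x % y = x - y * (x / y) := rfl

theorem norm_mod_lt (x : Eis) {y : Eis} (hy : y ≠ 0) : norm (x % y) < norm y := by
  have hd : 0 < norm y := norm_pos hy
  set d : ℤ := norm y with hdef
  set c : Eis := x * conj y with hc
  set q : Eis := x / y with hq
  have hdQ : (0:ℚ) < ((d : ℤ) : ℚ) := by exact_mod_cast hd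
  have key : (x % y) * conj y = c - (d : Eis) * q := by
    rw [mod_def]
    linear_combination (-q) * mul_conj y
  have hb1 : |(c.re : ℚ) - (d : ℚ) * ((q.re : ℤ) : ℚ)| ≤ (d : ℚ) / 2 := by
    have hq' : (q.re : ℤ) = round ((c.re : ℚ) / (d : ℚ)) := by rw [hq, div_def]
    have heq : (c.re : ℚ) - (d : ℚ) * ((q.re : ℤ) : ℚ)
        = (d:ℚ) * ((c.re : ℚ)/(d:ℚ) - ((round ((c.re : ℚ) / (d : ℚ)) : ℤ) : ℚ)) := by
      rw [hq']; field_simp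
    rw [heq, abs_mul, abs_of_pos hdQ]
    calc (d:ℚ) * |(c.re : ℚ)/(d:ℚ) - ((round ((c.re : ℚ) / (d : ℚ)) : ℤ) : ℚ)|
        ≤ (d:ℚ) * (1/2) :=
          mul_le_mul_of_nonneg_left (abs_sub_round _) hdQ.le
      _ = (d : ℚ) / 2 := by ring
  have hb2 : |(c.im : ℚ) - (d : ℚ) * ((q.im : ℤ) : ℚ)| ≤ (d : ℚ) / 2 := by
    have hq' : (q.im : ℤ) = round ((c.im : ℚ) / (d : ℚ)) := by rw [hq, div_def]
    have heq : (c.im : ℚ) - (d : ℚ) * ((q.im : ℤ) : ℚ)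
        = (d:ℚ) * ((c.im : ℚ)/(d:ℚ) - ((round ((c.im : ℚ) / (d : ℚ)) : ℤ) : ℚ)) := by
      rw [hq']; field_simp
    rw [heq, abs_mul, abs_of_pos hdQ]
    calc (d:ℚ) * |(c.im : ℚ)/(d:ℚ) - ((round ((c.im : ℚ) / (d : ℚ)) : ℤ) : ℚ)|
        ≤ (d:ℚ) * (1/2) :=
          mul_le_mul_of_nonneg_left (abs_sub_round _) hdQ.le
      _ = (d : ℚ) / 2 := by ring
  set e1 : ℤ := c.re - d * q.re with he1
  set e2 : ℤ := c.im - d * q.im with he2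
  have hz1 : (2 * e1) ^ 2 ≤ d ^ 2 := by
    have hcast : ((e1:ℤ):ℚ) = (c.re:ℚ) - (d:ℚ)*((q.re : ℤ):ℚ) := by
      rw [he1]; push_cast; ring
    have habs : |(e1:ℚ)| ≤ (d:ℚ)/2 := by rw [hcast]; exact hb1
    have h2 : (2 * (e1:ℚ)) ^ 2 ≤ (d:ℚ) ^ 2 := by
      nlinarith [sq_abs (e1 : ℚ), abs_nonneg (e1:ℚ)]
    exact_mod_cast h2
  have hz2 : (2 * e2) ^ 2 ≤ d ^ 2 := by
    have hcast : ((e2:ℤ):ℚ) = (c.im:ℚ) - (d:ℚ)*((q.im : ℤ):ℚ) := by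
      rw [he2]; push_cast; ring
    have habs : |(e2:ℚ)| ≤ (d:ℚ)/2 := by rw [hcast]; exact hb2
    have h2 : (2 * (e2:ℚ)) ^ 2 ≤ (d:ℚ) ^ 2 := by
      nlinarith [sq_abs (e2 : ℚ), abs_nonneg (e2:ℚ)]
    exact_mod_cast h2
  have hnorm : norm (c - (d : Eis) * q) = e1 ^ 2 - e1 * e2 + e2 ^ 2 := by
    simp only [norm, sub_re, sub_im, mul_re, mul_im, intCast_re, intCast_im, he1, he2]
    ring
  have hsmall : 4 * norm (c - (d : Eis) * q) ≤ 3 * d ^ 2 := by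
    rw [hnorm]; nlinarith [hz1, hz2, sq_nonneg (e1 + e2), sq_nonneg (e1 - e2)]
  have hconj : norm (conj y) = d := by
    simp only [norm, conj_re, conj_im, hdef]; ring
  have hmul : norm (x % y) * d = norm (c - (d : Eis) * q) := by
    have h := norm_mul (x % y) (conj y)
    rw [key, hconj] at h
    exact h.symm
  nlinarith [hmul, hsmall, hd, norm_nonneg (x % y)]

theorem natAbs_norm_mod_lt (x : Eis) {y : Eis} (hy : y ≠ 0) :
    (norm (x % y)).natAbs < (norm y).natAbs := by
  have h := norm_mod_lt x hy
  have h1 := norm_nonneg (x % y)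
  have h2 := norm_nonneg y
  omega

theorem natAbs_norm_le_mul_left (x : Eis) {y : Eis} (hy : y ≠ 0) :
    (norm x).natAbs ≤ (norm (x * y)).natAbs := by
  have h1 := norm_nonneg x
  have h2 := norm_pos hy
  have h3 : norm x ≤ norm (x * y) := by rw [norm_mul]; nlinarith
  have h4 := norm_nonneg (x * y)
  omega

instance : EuclideanDomain Eis :=
  { Eis.commRing, (inferInstance : Nontrivial Eis) with
    quotient := (· / ·)
    remainder := (· % ·)
    quotient_zero := fun x => by
      ext <;> simp [div_def, norm]
    quotient_mul_add_remainder_eq := fun x y => by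
      change y * (x / y) + (x - y * (x / y)) = x; ring
    r := _
    r_wellFounded := (measure (Int.natAbs ∘ norm)).wf
    remainder_lt := fun x y hy => natAbs_norm_mod_lt x hy
    mul_left_not_lt := fun a b hb0 => not_lt_of_ge <| natAbs_norm_le_mul_left a hb0 }

end Eis
namespace Eis

@[simp] theorem natCast_re (n : ℕ) : (n : Eis).re = n := rfl
@[simp] theorem natCast_im (n : ℕ) : (n : Eis).im = 0 := rfl
@[simp] theorem ofNat_re (n : ℕ) [n.AtLeastTwo] :
    (OfNat.ofNat n : Eis).re = OfNat.ofNat n := rfl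
@[simp] theorem ofNat_im (n : ℕ) [n.AtLeastTwo] :
    (OfNat.ofNat n : Eis).im = 0 := rfl

theorem pow3 (z : Eis) : z ^ 3 =
    ⟨z.re^3 + z.im^3 - 3*z.re*z.im^2, 3*z.re^2*z.im - 3*z.re*z.im^2⟩ := by
  have h3 : z^3 = z*z*z := by ring
  rw [h3]; ext <;> simp <;> ring

theorem norm_eq_one_of_isUnit {u : Eis} (h : IsUnit u) : norm u = 1 := by
  obtain ⟨v, hv⟩ := h.exists_right_inv
  have := norm_mul u v
  rw [hv] at this
  have h1 : norm (1 : Eis) = 1 := by simp [norm]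
  rw [h1] at this
  exact Int.eq_one_of_mul_eq_one_right (norm_nonneg u) this.symm

theorem unit_coords {u : Eis} (h : IsUnit u) :
    (u.re = 1 ∧ u.im = 0) ∨ (u.re = -1 ∧ u.im = 0) ∨ (u.re = 0 ∧ u.im = 1) ∨
    (u.re = 0 ∧ u.im = -1) ∨ (u.re = 1 ∧ u.im = 1) ∨ (u.re = -1 ∧ u.im = -1) := by
  have h1 : u.re ^ 2 - u.re * u.im + u.im ^ 2 = 1 := norm_eq_one_of_isUnit h
  set a := u.re with ha
  set b := u.im with hb
  have hbb : -1 ≤ b ∧ b ≤ 1 := by constructor <;> nlinarith [sq_nonneg (2*a - b), sq_nonneg b]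
  have haa : -1 ≤ a ∧ a ≤ 1 := by constructor <;> nlinarith [sq_nonneg (2*b - a), sq_nonneg a]
  obtain ⟨hb1, hb2⟩ := hbb
  obtain ⟨ha1, ha2⟩ := haa
  interval_cases a <;> interval_cases b <;> revert h1 <;> decide

theorem even_aux (m n : ℤ) : (2:ℤ) ∣ 3*m^2*n - 3*m*n^2 := by
  obtain ⟨a, rfl | rfl⟩ := Int.even_or_odd' m <;>
    obtain ⟨c, rfl | rfl⟩ := Int.even_or_odd' n
  · exact ⟨12*a^2*c - 12*a*c^2, by ring⟩
  · exact ⟨6*a^2*(2*c+1) - 3*a*(2*c+1)^2, by ring⟩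
  · exact ⟨3*(2*a+1)^2*c - 6*(2*a+1)*c^2, by ring⟩
  · exact ⟨3*(2*a+1)*(2*c+1)*(a-c), by ring⟩

/-- Euler's parametrization: if `s² + 3t² = b³` with suitable coprimality,
then `s + t√-3` is a cube in the Eisenstein integers. -/
theorem euler_param {s t b : ℤ} (hco : IsCoprime s t) (hodd : Odd (s + t))
    (hb2 : ¬ (2:ℤ) ∣ b) (hb3 : ¬ (3:ℤ) ∣ b) (h : s^2 + 3*t^2 = b^3) :
    ∃ p q : ℤ, s + t = p^3 + q^3 - 3*p*q^2 ∧ 2*t = 3*p^2*q - 3*p*q^2 := by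
  set α : Eis := ⟨s + t, 2*t⟩ with hα
  set β : Eis := ⟨s - t, -(2*t)⟩ with hβ
  have hαβ : α * β = ((b : Eis)) ^ 3 := by
    rw [show (b : Eis) = ⟨b, 0⟩ from rfl, pow3]
    ext <;> simp
    · linear_combination h
    · ring
  -- coprimality of α and β
  obtain ⟨u, v, huv⟩ := hco
  have hc2 : IsCoprime (2:ℤ) b := (Int.prime_two.coprime_iff_not_dvd).mpr hb2
  have hc3 : IsCoprime (3:ℤ) b := (Int.prime_three.coprime_iff_not_dvd).mpr hb3
  have hc12 : IsCoprime (12:ℤ) (b^6) := by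
    have : IsCoprime (2*(2*3) : ℤ) b := (hc2.mul_left (hc2.mul_left hc3))
    have h12 : (12:ℤ) = 2*(2*3) := by norm_num
    rw [h12]
    exact this.pow_right
  obtain ⟨m, n, hmn⟩ := hc12
  set P : Eis := ⟨u + v, 2*u⟩ with hP
  set Q : Eis := ⟨u - v, 2*u⟩ with hQ
  have h2θ : P * α + Q * β = (⟨2, 4⟩ : Eis) := by
    ext <;> simp
    · linear_combination (2:ℤ) * huv
    · linear_combination (4:ℤ) * huv
  have hθθ : (⟨2, 4⟩ : Eis) * (⟨2, 4⟩ : Eis) = (((-12 : ℤ)) : Eis) := by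
    ext <;> decide
  have h1' : (m : Eis) * 12 + (n : Eis) * (b : Eis)^6 = 1 := by
    have := congrArg (fun k : ℤ => (k : Eis)) hmn
    push_cast at this
    exact this
  have hcop : IsCoprime α β := by
    refine ⟨-(m : Eis) * (⟨2, 4⟩ : Eis) * P + (n : Eis) * (b : Eis)^3 * β,
      -(m : Eis) * (⟨2, 4⟩ : Eis) * Q, ?_⟩
    linear_combination (-(m : Eis) * (⟨2, 4⟩ : Eis)) * h2θ +
      ((n : Eis) * (b : Eis)^3) * hαβ + (-(m : Eis)) * hθθ + h1'
  obtain ⟨δ, hassoc⟩ := exists_associated_pow_of_mul_eq_pow' hcop hαβ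
  obtain ⟨w, hw⟩ := hassoc
  set c1 : ℤ := δ.re^3 + δ.im^3 - 3*δ.re*δ.im^2 with hc1
  set c2 : ℤ := 3*δ.re^2*δ.im - 3*δ.re*δ.im^2 with hc2'
  have hδ3 : δ ^ 3 = ⟨c1, c2⟩ := pow3 δ
  have he_re : c1 * (w : Eis).re - c2 * (w : Eis).im = s + t := by
    have := congrArg Eis.re hw
    rwa [hδ3] at this
  have he_im : c1 * (w : Eis).im + c2 * (w : Eis).re - c2 * (w : Eis).im = 2*t := by
    have := congrArg Eis.im hw
    rwa [hδ3] at this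
  have heven : (2:ℤ) ∣ c2 := even_aux δ.re δ.im
  have hoddst : (s + t) % 2 = 1 := Int.odd_iff.mp hodd
  rcases unit_coords w.isUnit with ⟨h1, h2⟩ | ⟨h1, h2⟩ | ⟨h1, h2⟩ | ⟨h1, h2⟩ |
    ⟨h1, h2⟩ | ⟨h1, h2⟩ <;> rw [h1, h2] at he_re he_im
  · exact ⟨δ.re, δ.im, by linarith [he_re], by linarith [he_im]⟩
  · refine ⟨-δ.re, -δ.im, by linear_combination -he_re, by linear_combination -he_im⟩
  · omega
  · omega
  · omega
  · omega

end Eis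
section Descent

private lemma parity_sq (t : ℤ) : t^2 % 2 = t % 2 := by
  obtain ⟨k, rfl | rfl⟩ := Int.even_or_odd' t <;> ring_nf <;> omega

private lemma parity_cube (t : ℤ) : t^3 % 2 = t % 2 := by
  obtain ⟨k, rfl | rfl⟩ := Int.even_or_odd' t <;> ring_nf <;> omega

private lemma coprime_two_of_odd {k : ℤ} (h : ¬ (2:ℤ) ∣ k) : IsCoprime k 2 := by
  obtain ⟨j, hj⟩ : ∃ j, k = 2*j + 1 := ⟨(k-1)/2, by omega⟩
  exact ⟨1, -j, by omega⟩

private lemma cube_inj {a b : ℤ} (h : a^3 = b^3) : a = b :=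
  (Odd.strictMono_pow (R := ℤ) (by decide)).injective h

private lemma odd_three : Odd 3 := by decide

/-- if `3p` and `3q` are in the ideal `(u,v)`, `p q` coprime, and `¬ 3 ∣ u`,
then `u` and `v` are coprime -/
private lemma coprime_of_combo {u v p q : ℤ} (hpq : IsCoprime p q) (h3u : ¬ (3:ℤ) ∣ u)
    (h1 : ∃ a b : ℤ, a*u + b*v = 3*p) (h2 : ∃ a b : ℤ, a*u + b*v = 3*q) :
    IsCoprime u v := by
  rw [Int.isCoprime_iff_gcd_eq_one]
  set d : ℕ := Int.gcd u v with hd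
  have hdu : (d:ℤ) ∣ u := Int.gcd_dvd_left u v
  have hdv : (d:ℤ) ∣ v := Int.gcd_dvd_right u v
  obtain ⟨a1, b1, hab1⟩ := h1
  obtain ⟨a2, b2, hab2⟩ := h2
  have hd3p : (d:ℤ) ∣ 3*p := hab1 ▸ dvd_add (Dvd.dvd.mul_left hdu a1) (Dvd.dvd.mul_left hdv b1)
  have hd3q : (d:ℤ) ∣ 3*q := hab2 ▸ dvd_add (Dvd.dvd.mul_left hdu a2) (Dvd.dvd.mul_left hdv b2)
  obtain ⟨xx, yy, hxy⟩ := hpq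
  have hd3 : (d:ℤ) ∣ 3 := by
    have h33 : xx*(3*p) + yy*(3*q) = 3 := by linear_combination 3*hxy
    exact h33 ▸ dvd_add (Dvd.dvd.mul_left hd3p xx) (Dvd.dvd.mul_left hd3q yy)
  have hd3' : d ∣ 3 := Int.ofNat_dvd.mp (by exact_mod_cast hd3)
  rcases (Nat.dvd_prime Nat.prime_three).mp hd3' with h | h
  · exact h
  · exact absurd (by exact_mod_cast h ▸ hdu : (3:ℤ) ∣ u) h3u

/-- extracting coprimality of the Euler parameters -/
private lemma coprime_pq {S T p q : ℤ} (hST : IsCoprime S T) (hodd : Odd (S+T))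
    (e1 : S + T = p^3 + q^3 - 3*p*q^2) (e2 : 2*T = 3*p^2*q - 3*p*q^2) :
    IsCoprime p q := by
  rw [Int.isCoprime_iff_gcd_eq_one]
  set d : ℕ := Int.gcd p q with hd
  have hdp : (d:ℤ) ∣ p := Int.gcd_dvd_left p q
  have hdq : (d:ℤ) ∣ q := Int.gcd_dvd_right p q
  have hd1 : (d:ℤ) ∣ S + T := by
    rw [e1, show p^3 + q^3 - 3*p*q^2 = p*(p^2 - 3*q^2) + q*q^2 from by ring]
    exact dvd_add (hdp.mul_right _) (hdq.mul_right _)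
  have hd2 : (d:ℤ) ∣ 2*T := by
    rw [e2, show 3*p^2*q - 3*p*q^2 = p*(3*p*q - 3*q^2) from by ring]
    exact hdp.mul_right _
  have hdodd : ¬ (2:ℤ) ∣ (d:ℤ) := by
    intro h2
    have h2ST : (2:ℤ) ∣ S + T := h2.trans hd1
    obtain ⟨k, hk⟩ := h2ST
    obtain ⟨j, hj⟩ := hodd
    omega
  have hdT : (d:ℤ) ∣ T := (coprime_two_of_odd hdodd).dvd_of_dvd_mul_left hd2
  have hdS : (d:ℤ) ∣ S := by
    have h := dvd_sub hd1 hdT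
    simpa using h
  have hu : IsUnit ((d:ℕ):ℤ) := hST.isUnit_of_dvd' hdS hdT
  rcases Int.isUnit_iff.mp hu with h | h
  · exact_mod_cast h
  · omega

end Descent
section Main

private lemma split3 {E F G a : ℤ} (hEF : IsCoprime E F) (hEG : IsCoprime E G)
    (hFG : IsCoprime F G) (hprod : E * (F * G) = 2 * a ^ 3) (hE : (2:ℤ) ∣ E) :
    ∃ A B C : ℤ, E = 2 * A^3 ∧ F = B^3 ∧ G = C^3 ∧ a = A * B * C := by
  obtain ⟨g, hg⟩ := hE
  have hcan : g * (F * G) = a ^ 3 := by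
    have h2 : 2 * (g * (F * G)) = 2 * a^3 := by rw [← hprod, hg]; ring
    exact mul_left_cancel₀ (by norm_num) h2
  have hgF : IsCoprime g F := hEF.of_isCoprime_of_dvd_left ⟨2, by omega⟩
  have hgG : IsCoprime g G := hEG.of_isCoprime_of_dvd_left ⟨2, by omega⟩
  obtain ⟨⟨A, hA⟩, ⟨D, hD⟩⟩ := Int.eq_pow_of_mul_eq_pow_odd (hgF.mul_right hgG) odd_three hcan
  obtain ⟨⟨B, hB⟩, ⟨C, hC⟩⟩ := Int.eq_pow_of_mul_eq_pow_odd hFG odd_three hD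
  refine ⟨A, B, C, by rw [hg, hA], hB, hC, cube_inj ?_⟩
  rw [← hcan, hA, hB, hC]; ring

set_option maxHeartbeats 1600000 in
private theorem descent : ∀ n : ℕ, ∀ x y z : ℤ, z.natAbs = n →
    x ^ 3 + y ^ 3 = 2 * z ^ 3 → x ≠ y → z = 0 := by
  intro n
  induction n using Nat.strong_induction_on with
  | _ n IH =>
  intro x y z hn h hxy
  by_contra hz
  by_cases hcxy : IsCoprime x y
  swap
  · -- non-coprime case: divide by a common prime
    have hg1 : Int.gcd x y ≠ 1 := fun hh => hcxy (Int.isCoprime_iff_gcd_eq_one.mpr hh)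
    obtain ⟨pp, hpp, hdvd⟩ := Nat.exists_prime_and_dvd hg1
    have hpx : (pp:ℤ) ∣ x := (Int.natCast_dvd_natCast.mpr hdvd).trans (Int.gcd_dvd_left x y)
    have hpy : (pp:ℤ) ∣ y := (Int.natCast_dvd_natCast.mpr hdvd).trans (Int.gcd_dvd_right x y)
    have hp2 : (2:ℕ) ≤ pp := hpp.two_le
    obtain ⟨x1, rfl⟩ := hpx
    obtain ⟨y1, rfl⟩ := hpy
    have hpz : (pp:ℤ) ∣ z := by
      by_cases hpp2 : pp = 2
      · subst hpp2
        have h4 : 2*(z^3) = 2*(4*(x1^3+y1^3)) := by push_cast at h ⊢; linear_combination -h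
        have hcz := parity_cube z
        omega
      · have hpprime : Prime (pp:ℤ) := Int.prime_iff_natAbs_prime.mpr (by simpa using hpp)
        have hdd : (pp:ℤ) ∣ 2*z^3 := by
          rw [← h]
          exact dvd_add (dvd_pow (dvd_mul_right _ _) (by norm_num))
            (dvd_pow (dvd_mul_right _ _) (by norm_num))
        rcases hpprime.dvd_mul.mp hdd with hd2 | hd3
        · exact absurd ((Nat.prime_dvd_prime_iff_eq hpp Nat.prime_two).mp
            (by exact_mod_cast hd2)) hpp2
        · exact hpprime.dvd_of_dvd_pow hd3
    obtain ⟨z1, rfl⟩ := hpz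
    have hppz : ((pp:ℤ)) ≠ 0 := by positivity
    have h1 : x1^3 + y1^3 = 2*z1^3 := by
      have hcube : (pp:ℤ)^3 * (x1^3+y1^3) = (pp:ℤ)^3 * (2*z1^3) := by linear_combination h
      exact mul_left_cancel₀ (pow_ne_zero 3 hppz) hcube
    have hxy1 : x1 ≠ y1 := fun hh => hxy (by rw [hh])
    have hz10 : z1 ≠ 0 := fun h0 => hz (by rw [h0, mul_zero])
    have hlt : z1.natAbs < n := by
      have hnn : ((pp:ℤ) * z1).natAbs = pp * z1.natAbs := by
        rw [Int.natAbs_mul, Int.natAbs_natCast]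
      have h1z : 1 ≤ z1.natAbs := Int.natAbs_pos.mpr hz10
      have h2' : 2 * z1.natAbs ≤ pp * z1.natAbs := Nat.mul_le_mul_right _ hp2
      omega
    have := IH z1.natAbs hlt x1 y1 z1 rfl h1 hxy1
    exact hz (by rw [this, mul_zero])
  -- coprime case
  have hnb : ¬((2:ℤ) ∣ x ∧ (2:ℤ) ∣ y) := by
    rintro ⟨h1, h2⟩
    rcases Int.isUnit_iff.mp (hcxy.isUnit_of_dvd' h1 h2) with hh | hh <;> norm_num at hh
  have hcx := parity_cube x
  have hcy := parity_cube y
  have hcz := parity_cube z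
  have hxoddy : x % 2 = 1 ∧ y % 2 = 1 := by omega
  obtain ⟨s, hs⟩ : ∃ s, x + y = 2*s := ⟨(x+y)/2, by omega⟩
  obtain ⟨t, ht⟩ : ∃ t, x - y = 2*t := ⟨(x-y)/2, by omega⟩
  have hx : x = s + t := by omega
  have hy : y = s - t := by omega
  subst hx; subst hy
  have ht0 : t ≠ 0 := fun h0 => hxy (by omega)
  have hoddst : Odd (s+t) := Int.odd_iff.mpr (by omega)
  have hst : IsCoprime s t := by
    obtain ⟨u, v, huv⟩ := hcxy
    exact ⟨u + v, u - v, by linear_combination huv⟩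
  have hz3 : s*(s^2+3*t^2) = z^3 := by
    have h2 : 2*(s*(s^2+3*t^2)) = 2*z^3 := by linear_combination h
    exact mul_left_cancel₀ (by norm_num) h2
  have hs0 : s ≠ 0 := by
    intro h0
    apply hz
    have hzz : z^3 = 0 := by rw [← hz3, h0, zero_mul]
    exact (pow_eq_zero_iff (by norm_num)).mp hzz
  have ht2 : 1 ≤ t^2 := by
    have h1 : t^2 ≠ 0 := pow_ne_zero 2 ht0
    have h2 : 0 ≤ t^2 := sq_nonneg t
    omega
  have hpst := parity_sq t
  have hpss := parity_sq s
  clear h hcx hcy hcz hxoddy hnb hs ht hxy hcxy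
  by_cases h3s : (3:ℤ) ∣ s
  · -- case 3 ∣ s
    obtain ⟨v, rfl⟩ := h3s
    have h3z : (3:ℤ) ∣ z := by
      apply Int.prime_three.dvd_of_dvd_pow (n := 3)
      rw [← hz3]
      exact Dvd.dvd.mul_right ⟨v, rfl⟩ _
    obtain ⟨w, rfl⟩ := h3z
    have h3t : ¬ (3:ℤ) ∣ t := by
      intro hdt
      rcases Int.isUnit_iff.mp (hst.isUnit_of_dvd' ⟨v, rfl⟩ hdt) with hh | hh <;> norm_num at hh
    have hw3 : 3*w^3 = v*(t^2+3*v^2) :=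
      mul_left_cancel₀ (by norm_num : (9:ℤ) ≠ 0) (by linear_combination -hz3)
    have h3v : (3:ℤ) ∣ v := by
      have h3vt : (3:ℤ) ∣ v*(t^2+3*v^2) := ⟨w^3, hw3.symm⟩
      rcases Int.prime_three.dvd_mul.mp h3vt with hh | hh
      · exact hh
      · exfalso
        obtain ⟨k, hk⟩ := hh
        have : (3:ℤ) ∣ t^2 := ⟨k - v^2, by linarith⟩
        exact h3t (Int.prime_three.dvd_of_dvd_pow this)
    obtain ⟨m, rfl⟩ := h3v
    have hwm : w^3 = m*(t^2+27*m^2) :=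
      mul_left_cancel₀ (by norm_num : (3:ℤ) ≠ 0) (by linear_combination hw3)
    have hw0 : w ≠ 0 := fun h0 => hz (by rw [h0, mul_zero])
    have hm0 : m ≠ 0 := by
      intro h0
      apply hw0
      have : w^3 = 0 := by rw [hwm, h0, zero_mul]
      exact (pow_eq_zero_iff (by norm_num)).mp this
    have hmt : IsCoprime m t := hst.of_isCoprime_of_dvd_left ⟨9, by ring⟩
    have hcop_m : IsCoprime m (t^2+27*m^2) := by
      have h1 : IsCoprime m (t^2) := hmt.pow_right
      have h2 := h1.add_mul_left_right (27*m)
      rwa [show t^2 + m*(27*m) = t^2+27*m^2 from by ring] at h2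
    obtain ⟨⟨a, ha⟩, ⟨b, hb⟩⟩ := Int.eq_pow_of_mul_eq_pow_odd hcop_m odd_three hwm.symm
    have hpsm := parity_sq m
    have hb2 : ¬ (2:ℤ) ∣ b := by
      rintro ⟨k, hk⟩
      have hbb : t^2+27*m^2 = 8*k^3 := by rw [hb, hk]; ring
      have hodd2 : (3*(3*m)+t) % 2 = 1 := Int.odd_iff.mp hoddst
      omega
    have hb3 : ¬ (3:ℤ) ∣ b := by
      rintro ⟨k, hk⟩
      have hbb : t^2 = 3*(9*k^3 - 9*m^2) := by rw [hk] at hb; linear_combination hb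
      exact h3t (Int.prime_three.dvd_of_dvd_pow ⟨_, hbb⟩)
    have hcot3m : IsCoprime t (3*m) := by
      have h1 : IsCoprime t 3 := ((Int.prime_three.coprime_iff_not_dvd).mpr h3t).symm
      exact h1.mul_right hmt.symm
    have hoddt3m : Odd (t + 3*m) := by
      have := Int.odd_iff.mp hoddst
      exact Int.odd_iff.mpr (by omega)
    clear hz3 hw3 hs0 hpss hoddst hst
    obtain ⟨p, q, e1, e2⟩ := Eis.euler_param hcot3m hoddt3m hb2 hb3
      (by linear_combination hb)
    have h2t : 2*t = (p+q)*((2*p-q)*(p-2*q)) := by linear_combination 2*e1 - e2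
    have h2a : 2*a^3 = p*(q*(p-q)) :=
      mul_left_cancel₀ (by norm_num : (3:ℤ) ≠ 0) (by linear_combination e2 - 6*ha)
    have hpq : IsCoprime p q := coprime_pq hcot3m hoddt3m e1 e2
    clear e1 hcop_m hmt h3t hcot3m hoddt3m hpsm hpst
    have hp_pq : IsCoprime p (p - q) := by
      have hh := hpq.neg_right.add_mul_left_right 1
      rwa [mul_one, neg_add_eq_sub] at hh
    have hq_pq : IsCoprime q (p - q) := by
      have hh := hpq.symm.neg_right.add_mul_left_right 1
      rw [mul_one, neg_add_eq_sub] at hh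
      have hh2 := hh.neg_right
      rwa [neg_sub] at hh2
    have ha0 : a ≠ 0 := by
      intro h0
      apply hm0
      have : (2:ℤ)*m = 0 := by
        have hmm : 2*m = p*(q*(p-q)) := by rw [← h2a, ha]
        rw [hmm, ← h2a, h0]; ring
      omega
    have hb1 : 1 ≤ b := by
      have hb3' : 1 ≤ b^3 := by
        rw [← hb]; nlinarith [sq_nonneg m]
      nlinarith [sq_nonneg b, sq_nonneg (b+1), sq_nonneg (b-1)]
    have hwab : w = a*b := cube_inj (by rw [hwm, hb, ha]; ring)
    have hnb1 : 1 ≤ b.natAbs := by omega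
    -- three parity blocks for p, q
    have hpq2 : ¬(p % 2 = 0 ∧ q % 2 = 0) := by
      rintro ⟨h1, h2⟩
      rcases Int.isUnit_iff.mp (hpq.isUnit_of_dvd' (show (2:ℤ) ∣ p by omega)
        (show (2:ℤ) ∣ q by omega)) with hh | hh <;> norm_num at hh
    rcases Int.emod_two_eq p with hp2 | hp2 <;> rcases Int.emod_two_eq q with hq2 | hq2
    · exact absurd ⟨hp2, hq2⟩ hpq2
    · -- p even, q odd : E = p, F = q, G = q - p
      have hEG : IsCoprime p (q - p) := by
        have hh := hp_pq.neg_right; rwa [neg_sub] at hh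
      have hFG : IsCoprime q (q - p) := by
        have hh := hq_pq.neg_right; rwa [neg_sub] at hh
      obtain ⟨A, B, C, hgA, hBB, hCC, haABC⟩ := split3 hpq hEG hFG
        (show p * (q * (q - p)) = 2*(-a)^3 from by linear_combination h2a) (by omega)
      have hnew : B^3 + (-C)^3 = 2*A^3 := by linear_combination -hBB + hCC + hgA
      have hBC : B ≠ -C := by
        intro heq
        have hFg : q = -(q - p) := by linear_combination hBB + hCC + (B^2 - B*C + C^2) * heq
        have hp2q : p = 2*q := by omega
        rw [hp2q] at h2t
        have : 2*t = 0 := by linear_combination h2t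
        omega
      have hane : (-a) ≠ 0 := by simpa using ha0
      have hA1 : 1 ≤ A.natAbs := Int.natAbs_pos.mpr (fun h0 => hane (by rw [haABC, h0]; ring))
      have hB1 : 1 ≤ B.natAbs := Int.natAbs_pos.mpr (fun h0 => hane (by rw [haABC, h0]; ring))
      have hC1 : 1 ≤ C.natAbs := Int.natAbs_pos.mpr (fun h0 => hane (by rw [haABC, h0]; ring))
      have hlt : A.natAbs < n := by
        rw [← hn]
        have hnz : (3*w).natAbs = 3*(A.natAbs*B.natAbs*C.natAbs*b.natAbs) := by
          rw [hwab, show a = -(A*B*C) from by linarith [haABC]]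
          simp [Int.natAbs_mul]
        rw [hnz]
        calc A.natAbs < 3*(A.natAbs*1*1*1) := by omega
          _ ≤ 3*(A.natAbs*B.natAbs*C.natAbs*b.natAbs) :=
            Nat.mul_le_mul_left 3 (Nat.mul_le_mul (Nat.mul_le_mul
              (Nat.mul_le_mul (le_refl _) hB1) hC1) hnb1)
      have hfin := IH A.natAbs hlt B (-C) A rfl hnew hBC
      exact absurd hfin (by omega)
    · -- p odd, q even : E = q, F = p, G = p - q
      obtain ⟨A, B, C, hgA, hBB, hCC, haABC⟩ := split3 hpq.symm hq_pq hp_pq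
        (show q * (p * (p - q)) = 2*a^3 from by linear_combination -h2a) (by omega)
      have hnew : B^3 + (-C)^3 = 2*A^3 := by linear_combination -hBB + hCC + hgA
      have hBC : B ≠ -C := by
        intro heq
        have hFg : p = -(p - q) := by linear_combination hBB + hCC + (B^2 - B*C + C^2) * heq
        have hp2q : q = 2*p := by omega
        rw [hp2q] at h2t
        have : 2*t = 0 := by linear_combination h2t
        omega
      have hA1 : 1 ≤ A.natAbs := Int.natAbs_pos.mpr (fun h0 => ha0 (by rw [haABC, h0]; ring))
      have hB1 : 1 ≤ B.natAbs := Int.natAbs_pos.mpr (fun h0 => ha0 (by rw [haABC, h0]; ring))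
      have hC1 : 1 ≤ C.natAbs := Int.natAbs_pos.mpr (fun h0 => ha0 (by rw [haABC, h0]; ring))
      have hlt : A.natAbs < n := by
        rw [← hn]
        have hnz : (3*w).natAbs = 3*(A.natAbs*B.natAbs*C.natAbs*b.natAbs) := by
          rw [hwab, haABC]
          simp [Int.natAbs_mul]
        rw [hnz]
        calc A.natAbs < 3*(A.natAbs*1*1*1) := by omega
          _ ≤ 3*(A.natAbs*B.natAbs*C.natAbs*b.natAbs) :=
            Nat.mul_le_mul_left 3 (Nat.mul_le_mul (Nat.mul_le_mul
              (Nat.mul_le_mul (le_refl _) hB1) hC1) hnb1)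
      have hfin := IH A.natAbs hlt B (-C) A rfl hnew hBC
      exact absurd hfin (by omega)
    · -- p odd, q odd : E = p - q, F = p, G = q
      obtain ⟨A, B, C, hgA, hBB, hCC, haABC⟩ := split3 hp_pq.symm hq_pq.symm hpq
        (show (p - q) * (p * q) = 2*a^3 from by linear_combination -h2a) (by omega)
      have hnew : B^3 + (-C)^3 = 2*A^3 := by linear_combination -hBB + hCC + hgA
      have hBC : B ≠ -C := by
        intro heq
        have hFg : p = -q := by linear_combination hBB + hCC + (B^2 - B*C + C^2) * heq
        rw [show p = -q from hFg] at h2t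
        have : 2*t = 0 := by linear_combination h2t
        omega
      have hA1 : 1 ≤ A.natAbs := Int.natAbs_pos.mpr (fun h0 => ha0 (by rw [haABC, h0]; ring))
      have hB1 : 1 ≤ B.natAbs := Int.natAbs_pos.mpr (fun h0 => ha0 (by rw [haABC, h0]; ring))
      have hC1 : 1 ≤ C.natAbs := Int.natAbs_pos.mpr (fun h0 => ha0 (by rw [haABC, h0]; ring))
      have hlt : A.natAbs < n := by
        rw [← hn]
        have hnz : (3*w).natAbs = 3*(A.natAbs*B.natAbs*C.natAbs*b.natAbs) := by
          rw [hwab, haABC]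
          simp [Int.natAbs_mul]
        rw [hnz]
        calc A.natAbs < 3*(A.natAbs*1*1*1) := by omega
          _ ≤ 3*(A.natAbs*B.natAbs*C.natAbs*b.natAbs) :=
            Nat.mul_le_mul_left 3 (Nat.mul_le_mul (Nat.mul_le_mul
              (Nat.mul_le_mul (le_refl _) hB1) hC1) hnb1)
      have hfin := IH A.natAbs hlt B (-C) A rfl hnew hBC
      exact absurd hfin (by omega)
  · -- case ¬ 3 ∣ s
    have hcop1 : IsCoprime s (s^2+3*t^2) := by
      have h1 : IsCoprime s (t^2) := hst.pow_right
      have h2 : IsCoprime s 3 := ((Int.prime_three.coprime_iff_not_dvd).mpr h3s).symm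
      have h3 : IsCoprime s (3*t^2) := h2.mul_right h1
      have h4 := h3.add_mul_left_right s
      rwa [show 3*t^2 + s*s = s^2+3*t^2 from by ring] at h4
    obtain ⟨⟨a, ha⟩, ⟨b, hb⟩⟩ := Int.eq_pow_of_mul_eq_pow_odd hcop1 odd_three hz3
    have hb2 : ¬ (2:ℤ) ∣ b := by
      rintro ⟨k, hk⟩
      have hbb : s^2+3*t^2 = 8*k^3 := by rw [hb, hk]; ring
      have hodds2 : (s+t) % 2 = 1 := Int.odd_iff.mp hoddst
      omega
    have hb3 : ¬ (3:ℤ) ∣ b := by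
      rintro ⟨k, hk⟩
      have hbb : s^2 = 3*(9*k^3 - t^2) := by rw [hk] at hb; linear_combination hb
      exact h3s (Int.prime_three.dvd_of_dvd_pow ⟨_, hbb⟩)
    obtain ⟨p, q, e1, e2⟩ := Eis.euler_param hst hoddst hb2 hb3 hb
    have h2s : 2*s = (p+q)*((2*p-q)*(p-2*q)) := by linear_combination 2*e1 - e2
    have hpq : IsCoprime p q := coprime_pq hst hoddst e1 e2
    have ha0 : a ≠ 0 := fun h0 => hs0 (by rw [ha, h0]; ring)
    have hb2' : 2 ≤ b := by
      have hb3' : 3 ≤ b^3 := by rw [← hb]; nlinarith [sq_nonneg s]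
      nlinarith [sq_nonneg b, sq_nonneg (b+1), sq_nonneg (b-1)]
    have hzab : z = a*b := cube_inj (by rw [← hz3, hb, ha]; ring)
    have hnb2 : 2 ≤ b.natAbs := by omega
    clear hz3 hcop1 hoddst hst hpss hs0 hb2 hb3 e1 ht2 hpst hb
    -- pairwise coprimality of the three factors
    have hnd3 : ∀ F Gr : ℤ, 2*s = F*Gr → ¬ (3:ℤ) ∣ F := by
      intro F Gr hFG hdF
      have h32s : (3:ℤ) ∣ 2*s := hFG ▸ hdF.mul_right Gr
      rcases Int.prime_three.dvd_mul.mp h32s with hh | hh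
      · norm_num at hh
      · exact h3s hh
    have hn31 : ¬ (3:ℤ) ∣ (p+q) := hnd3 (p+q) ((2*p-q)*(p-2*q)) (by linear_combination h2s)
    have hn32 : ¬ (3:ℤ) ∣ (2*p-q) := hnd3 (2*p-q) ((p+q)*(p-2*q)) (by linear_combination h2s)
    have cop12 : IsCoprime (p+q) (2*p-q) :=
      coprime_of_combo hpq hn31 ⟨1, 1, by ring⟩ ⟨2, -1, by ring⟩
    have cop13 : IsCoprime (p+q) (p-2*q) :=
      coprime_of_combo hpq hn31 ⟨2, 1, by ring⟩ ⟨1, -1, by ring⟩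
    have cop23 : IsCoprime (2*p-q) (p-2*q) :=
      coprime_of_combo hpq hn32 ⟨2, -1, by ring⟩ ⟨1, -2, by ring⟩
    have hpq2 : ¬(p % 2 = 0 ∧ q % 2 = 0) := by
      rintro ⟨h1, h2⟩
      rcases Int.isUnit_iff.mp (hpq.isUnit_of_dvd' (show (2:ℤ) ∣ p by omega)
        (show (2:ℤ) ∣ q by omega)) with hh | hh <;> norm_num at hh
    rcases Int.emod_two_eq p with hp2 | hp2 <;> rcases Int.emod_two_eq q with hq2 | hq2
    · exact absurd ⟨hp2, hq2⟩ hpq2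
    · -- p even, q odd : even factor is p - 2q : E = p-2q, F = 2p-q, G = p+q
      obtain ⟨A, B, C, hgA, hBB, hCC, haABC⟩ := split3 cop23.symm cop13.symm cop12.symm
        (show (p-2*q) * ((2*p-q) * (p+q)) = 2*a^3 from by linear_combination -h2s + 2*ha)
        (by omega)
      have hnew : B^3 + (-C)^3 = 2*A^3 := by linear_combination -hBB + hCC + hgA
      have hBC : B ≠ -C := by
        intro heq
        have hFg : 2*p - q = -(p+q) := by linear_combination hBB + hCC + (B^2 - B*C + C^2) * heq
        have hp0 : p = 0 := by omega
        rw [hp0] at e2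
        have : 2*t = 0 := by linear_combination e2
        omega
      have hA1 : 1 ≤ A.natAbs := Int.natAbs_pos.mpr (fun h0 => ha0 (by rw [haABC, h0]; ring))
      have hB1 : 1 ≤ B.natAbs := Int.natAbs_pos.mpr (fun h0 => ha0 (by rw [haABC, h0]; ring))
      have hC1 : 1 ≤ C.natAbs := Int.natAbs_pos.mpr (fun h0 => ha0 (by rw [haABC, h0]; ring))
      have hlt : A.natAbs < n := by
        rw [← hn]
        have hnz : z.natAbs = A.natAbs*B.natAbs*C.natAbs*b.natAbs := by
          rw [hzab, haABC]; simp [Int.natAbs_mul]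
        rw [hnz]
        calc A.natAbs < A.natAbs*1*1*2 := by omega
          _ ≤ A.natAbs*B.natAbs*C.natAbs*b.natAbs :=
            Nat.mul_le_mul (Nat.mul_le_mul (Nat.mul_le_mul (le_refl _) hB1) hC1) hnb2
      have hfin := IH A.natAbs hlt B (-C) A rfl hnew hBC
      exact absurd hfin (by omega)
    · -- p odd, q even : even factor is 2p - q : E = 2p-q, F = p+q, G = -(p-2q) = 2q-p
      have hEG : IsCoprime (2*p-q) (2*q-p) := by
        have hh := cop23.neg_right; rwa [show -(p-2*q) = 2*q-p from by ring] at hh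
      have hFG : IsCoprime (p+q) (2*q-p) := by
        have hh := cop13.neg_right; rwa [show -(p-2*q) = 2*q-p from by ring] at hh
      obtain ⟨A, B, C, hgA, hBB, hCC, haABC⟩ := split3 cop12.symm hEG hFG
        (show (2*p-q) * ((p+q) * (2*q-p)) = 2*(-a)^3 from by linear_combination h2s - 2*ha)
        (by omega)
      have hnew : B^3 + (-C)^3 = 2*A^3 := by linear_combination -hBB + hCC + hgA
      have hBC : B ≠ -C := by
        intro heq
        have hFg : p+q = -(2*q-p) := by linear_combination hBB + hCC + (B^2 - B*C + C^2) * heq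
        have hq0 : q = 0 := by omega
        rw [hq0] at e2
        have : 2*t = 0 := by linear_combination e2
        omega
      have hane : (-a) ≠ 0 := by simpa using ha0
      have hA1 : 1 ≤ A.natAbs := Int.natAbs_pos.mpr (fun h0 => hane (by rw [haABC, h0]; ring))
      have hB1 : 1 ≤ B.natAbs := Int.natAbs_pos.mpr (fun h0 => hane (by rw [haABC, h0]; ring))
      have hC1 : 1 ≤ C.natAbs := Int.natAbs_pos.mpr (fun h0 => hane (by rw [haABC, h0]; ring))
      have hlt : A.natAbs < n := by
        rw [← hn]
        have hnz : z.natAbs = A.natAbs*B.natAbs*C.natAbs*b.natAbs := by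
          rw [hzab, show a = -(A*B*C) from by linarith [haABC]]
          simp [Int.natAbs_mul]
        rw [hnz]
        calc A.natAbs < A.natAbs*1*1*2 := by omega
          _ ≤ A.natAbs*B.natAbs*C.natAbs*b.natAbs :=
            Nat.mul_le_mul (Nat.mul_le_mul (Nat.mul_le_mul (le_refl _) hB1) hC1) hnb2
      have hfin := IH A.natAbs hlt B (-C) A rfl hnew hBC
      exact absurd hfin (by omega)
    · -- p odd, q odd : even factor is p+q : E = p+q, F = 2p-q, G = p-2q
      obtain ⟨A, B, C, hgA, hBB, hCC, haABC⟩ := split3 cop12 cop13 cop23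
        (show (p+q) * ((2*p-q) * (p-2*q)) = 2*a^3 from by linear_combination -h2s + 2*ha)
        (by omega)
      have hnew : B^3 + (-C)^3 = 2*A^3 := by linear_combination -hBB + hCC + hgA
      have hBC : B ≠ -C := by
        intro heq
        have hFg : 2*p-q = -(p-2*q) := by linear_combination hBB + hCC + (B^2 - B*C + C^2) * heq
        have hpq' : p = q := by omega
        rw [hpq'] at e2
        have : 2*t = 0 := by linear_combination e2
        omega
      have hA1 : 1 ≤ A.natAbs := Int.natAbs_pos.mpr (fun h0 => ha0 (by rw [haABC, h0]; ring))
      have hB1 : 1 ≤ B.natAbs := Int.natAbs_pos.mpr (fun h0 => ha0 (by rw [haABC, h0]; ring))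
      have hC1 : 1 ≤ C.natAbs := Int.natAbs_pos.mpr (fun h0 => ha0 (by rw [haABC, h0]; ring))
      have hlt : A.natAbs < n := by
        rw [← hn]
        have hnz : z.natAbs = A.natAbs*B.natAbs*C.natAbs*b.natAbs := by
          rw [hzab, haABC]; simp [Int.natAbs_mul]
        rw [hnz]
        calc A.natAbs < A.natAbs*1*1*2 := by omega
          _ ≤ A.natAbs*B.natAbs*C.natAbs*b.natAbs :=
            Nat.mul_le_mul (Nat.mul_le_mul (Nat.mul_le_mul (le_refl _) hB1) hC1) hnb2
      have hfin := IH A.natAbs hlt B (-C) A rfl hnew hBC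
      exact absurd hfin (by omega)

end Main

/-- If `x ^ 3 + y ^ 3 = 2 z ^ 3` with `x ≠ y`, then `z = 0`. -/
theorem cube_sum_eq_two_cube (x y z : ℤ) (h : x ^ 3 + y ^ 3 = 2 * z ^ 3) (hxy : x ≠ y) :
    z = 0 :=
  descent z.natAbs x y z rfl h hxy
end

section
/- For every integer m ≥ 2, there are no nonzero integers x, y with x^m − y^2 = 1. -/
open Finset

local notation "ℤ[i]" => GaussianInt

namespace LebesgueAux

def ω : ℤ[i] := ⟨0, 1⟩

lemma ω_sq : ω ^ 2 = -1 := by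
  ext <;> simp [ω, pow_two, Zsqrtd.re_mul, Zsqrtd.im_mul]

lemma ω_pow_even (u : ℕ) : ω ^ (2 * u) = ((-1 : ℤ[i])) ^ u := by
  rw [pow_mul, ω_sq]

lemma ω_pow_odd (u : ℕ) : ω ^ (2 * u + 1) = ((-1 : ℤ[i])) ^ u * ω := by
  rw [pow_succ, ω_pow_even]

lemma neg_one_pow_re (u : ℕ) : (((-1 : ℤ[i])) ^ u).re = (-1 : ℤ) ^ u := by
  have : ((-1 : ℤ[i])) ^ u = (((-1 : ℤ) ^ u : ℤ) : ℤ[i]) := by push_cast; ring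
  rw [this, Zsqrtd.re_intCast]

lemma neg_one_pow_im (u : ℕ) : (((-1 : ℤ[i])) ^ u).im = 0 := by
  have : ((-1 : ℤ[i])) ^ u = (((-1 : ℤ) ^ u : ℤ) : ℤ[i]) := by push_cast; ring
  rw [this, Zsqrtd.im_intCast]

lemma ω_pow_even_im (u : ℕ) : (ω ^ (2 * u)).im = 0 := by
  rw [ω_pow_even, neg_one_pow_im]

lemma ω_pow_odd_im (u : ℕ) : (ω ^ (2 * u + 1)).im = (-1 : ℤ) ^ u := by
  rw [ω_pow_odd, Zsqrtd.im_mul, LebesgueAux.neg_one_pow_re, LebesgueAux.neg_one_pow_im, ω]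
  simp

lemma sum_even_vanish (g : ℕ → ℤ) (h : ∀ j, g (2 * j + 1) = 0) :
    ∀ N, ∑ k ∈ range (2 * N), g k = ∑ j ∈ range N, g (2 * j)
  | 0 => by simp
  | (N + 1) => by
    have h2 : 2 * (N + 1) = (2 * N + 1) + 1 := by ring
    rw [h2, Finset.sum_range_succ, Finset.sum_range_succ, h N, add_zero,
      sum_even_vanish g h N, Finset.sum_range_succ]

lemma im_pow_expand (s : ℤ) (M : ℕ) :
    (((⟨s, 1⟩ : ℤ[i])) ^ (2 * M + 1)).im =
      ∑ j ∈ range (M + 1), (-1 : ℤ) ^ (M + j) * ((2 * M + 1).choose (2 * j)) * s ^ (2 * j) := by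
  have h1 : (⟨s, 1⟩ : ℤ[i]) = (s : ℤ[i]) + ω := by ext <;> simp [ω]
  set m := 2 * M + 1 with hm
  have h2 : ((s : ℤ[i]) + ω) ^ m =
      ∑ k ∈ range (m + 1), (s : ℤ[i]) ^ k * ω ^ (m - k) * ((m.choose k : ℕ) : ℤ[i]) :=
    add_pow _ _ _
  have imhom : ∀ (T : Finset ℕ) (f : ℕ → ℤ[i]), (∑ k ∈ T, f k).im = ∑ k ∈ T, (f k).im := by
    intro T f
    exact map_sum (AddMonoidHom.mk' Zsqrtd.im (fun a b => Zsqrtd.im_add a b)) f T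
  have hterm : ∀ k : ℕ, ((s : ℤ[i]) ^ k * ω ^ (m - k) * ((m.choose k : ℕ) : ℤ[i])).im
      = s ^ k * (ω ^ (m - k)).im * (m.choose k : ℤ) := by
    intro k
    have c1 : (s : ℤ[i]) ^ k = ((s ^ k : ℤ) : ℤ[i]) := by push_cast; ring
    have c2 : ((m.choose k : ℕ) : ℤ[i]) = (((m.choose k : ℤ)) : ℤ[i]) := by push_cast; ring
    rw [c1, c2, Zsqrtd.im_mul, Zsqrtd.im_mul, Zsqrtd.im_intCast, Zsqrtd.re_intCast,
      Zsqrtd.im_intCast, Zsqrtd.re_intCast]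
    ring
  rw [h1, h2, imhom]
  have h3 : ∀ k ∈ range (m + 1), ((s : ℤ[i]) ^ k * ω ^ (m - k) * ((m.choose k : ℕ) : ℤ[i])).im
      = (fun k => s ^ k * (ω ^ (m - k)).im * (m.choose k : ℤ)) k := fun k _ => hterm k
  rw [Finset.sum_congr rfl h3]
  have hodd : ∀ j, (fun k => s ^ k * (ω ^ (m - k)).im * (m.choose k : ℤ)) (2 * j + 1) = 0 := by
    intro j
    obtain ⟨u, hu⟩ : ∃ u, m - (2 * j + 1) = 2 * u := ⟨(m - (2*j+1))/2, by omega⟩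
    simp only [hu, ω_pow_even_im, mul_zero, zero_mul]
  have hsplit : m + 1 = 2 * (M + 1) := by omega
  rw [hsplit, sum_even_vanish _ hodd (M + 1)]
  refine Finset.sum_congr rfl ?_
  intro j hj
  have hjM : j ≤ M := Nat.lt_succ_iff.mp (mem_range.mp hj)
  have h4 : m - 2 * j = 2 * (M - j) + 1 := by omega
  rw [h4, ω_pow_odd_im]
  have h5 : (-1 : ℤ) ^ (M + j) = (-1 : ℤ) ^ (M - j) := by
    have h6 : M + j = (M - j) + 2 * j := by omega
    rw [h6, pow_add, pow_mul]
    norm_num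
  rw [h5]
  ring



lemma pm_eq (t e k : ℤ) (ht : t = 1 ∨ t = -1) (he : e = 1 ∨ e = -1)
    (h : t - e = 4 * k) : t = e := by
  rcases ht with h1 | h1 <;> rcases he with h2 | h2 <;> omega

lemma k_le_pow (k : ℕ) (hk : 2 ≤ k) : k ≤ 2 ^ (2 * k - 3) := by
  rcases Nat.eq_or_lt_of_le hk with h | h
  · subst h; norm_num
  · calc k ≤ 2 ^ k := (Nat.lt_two_pow_self (n := k)).le
      _ ≤ 2 ^ (2 * k - 3) := Nat.pow_le_pow_right (by norm_num) (by omega)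

lemma val_term (m M : ℕ) (hm : m = 2 * M + 1) (hM : 1 ≤ M) (n : ℕ) (hn : 2 ∣ n) (hn0 : n ≠ 0)
    (k : ℕ) (hk2 : 2 ≤ k) (hkM : k ≤ M) :
    2 ^ ((m.choose 2 * n ^ 2).factorization 2 + 1) ∣ m.choose (2 * k) * n ^ (2 * k) := by
  have hC2 : m.choose 2 ≠ 0 := (Nat.choose_pos (by omega)).ne'
  have hA : m.choose (2 * k) ≠ 0 := (Nat.choose_pos (by omega)).ne'
  have hid : m.choose (2 * k) * ((2 * k).choose 2) = m.choose 2 * (m - 2).choose (2 * k - 2) :=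
    Nat.choose_mul (by omega)
  have h2k : (2 * k).choose 2 = k * (2 * k - 1) := by
    rw [Nat.choose_two_right]
    have h : 2 * k * (2 * k - 1) = 2 * (k * (2 * k - 1)) := by ring
    rw [h, Nat.mul_div_cancel_left _ (by norm_num)]
  have hD : (m - 2).choose (2 * k - 2) ≠ 0 := (Nat.choose_pos (by omega)).ne'
  have hk0 : k ≠ 0 := by omega
  have hodd : ¬ (2 ∣ (2 * k - 1)) := by omega
  have hfac : (m.choose (2 * k)).factorization 2 + ((k * (2 * k - 1)).factorization 2)
      = (m.choose 2).factorization 2 + ((m - 2).choose (2 * k - 2)).factorization 2 := by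
    have hkk : k * (2 * k - 1) ≠ 0 := Nat.mul_ne_zero (by omega) (by omega)
    have h' : m.choose (2 * k) * (k * (2 * k - 1)) = m.choose 2 * (m - 2).choose (2 * k - 2) := by
      rw [← h2k]; exact hid
    have := congrArg (fun f : ℕ →₀ ℕ => f 2) (congrArg Nat.factorization h')
    simpa [Nat.factorization_mul hA hkk, Nat.factorization_mul hC2 hD,
      Finsupp.add_apply] using this
  have hkodd : (k * (2 * k - 1)).factorization 2 = k.factorization 2 := by
    rw [Nat.factorization_mul hk0 (by omega), Finsupp.add_apply,
      Nat.factorization_eq_zero_of_not_dvd hodd, add_zero]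
  rw [hkodd] at hfac
  have hkv : k.factorization 2 ≤ 2 * k - 3 := by
    have h1 : 2 ^ (k.factorization 2) ≤ k := Nat.ordProj_le 2 hk0
    have h2 : k ≤ 2 ^ (2 * k - 3) := k_le_pow k hk2
    exact (Nat.pow_le_pow_iff_right (by norm_num)).mp (h1.trans h2)
  have hnv : 1 ≤ n.factorization 2 := Nat.Prime.factorization_pos_of_dvd Nat.prime_two hn0 hn
  rw [Nat.Prime.pow_dvd_iff_le_factorization Nat.prime_two
    (mul_ne_zero hA (pow_ne_zero _ hn0))]
  rw [Nat.factorization_mul hA (pow_ne_zero _ hn0), Nat.factorization_mul hC2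
    (pow_ne_zero _ hn0), Nat.factorization_pow, Nat.factorization_pow]
  simp only [Finsupp.add_apply, Finsupp.smul_apply, smul_eq_mul]
  set a := (m.choose (2 * k)).factorization 2
  set c := (m.choose 2).factorization 2
  set d := ((m - 2).choose (2 * k - 2)).factorization 2
  set kv := k.factorization 2
  set nv := n.factorization 2
  have e1 : (2 * k - 2) * 1 ≤ (2 * k - 2) * nv := Nat.mul_le_mul_left _ hnv
  have e2 : 2 * k * nv = (2 * k - 2) * nv + 2 * nv := by
    rw [← Nat.add_mul]; congr 1; omega
  omega

end LebesgueAux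

set_option maxHeartbeats 2000000 in
/-- V. A. Lebesgue's theorem: for every integer `m ≥ 2`, there are no nonzero integers
`x, y` with `x ^ m - y ^ 2 = 1`. -/
theorem lebesgue_catalan (m : ℕ) (hm : 2 ≤ m) :
    ¬ ∃ x y : ℤ, x ≠ 0 ∧ y ≠ 0 ∧ x ^ m - y ^ 2 = 1 := by
  rintro ⟨x, y, hx, hy, h⟩
  have hxm : x ^ m = y ^ 2 + 1 := by linarith
  rcases Nat.even_or_odd m with he | ho
  · -- even exponent: difference of consecutive squares
    obtain ⟨nn, hnn⟩ := he
    have hz2 : (x ^ nn) ^ 2 = y ^ 2 + 1 := by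
      rw [← hxm, ← pow_mul]; congr 1; omega
    have hfac : (x ^ nn - y) * (x ^ nn + y) = 1 := by linear_combination hz2
    rcases Int.mul_eq_one_iff_eq_one_or_neg_one.mp hfac with ⟨h1, h2⟩ | ⟨h1, h2⟩ <;> omega
  · obtain ⟨M, hM⟩ := ho
    have hM1 : 1 ≤ M := by omega
    -- y is even
    have hyeven : ∃ c : ℤ, y = 2 * c := by
      rcases Int.even_or_odd y with ⟨c, hc⟩ | ⟨c, hc⟩
      · exact ⟨c, by omega⟩
      · exfalso
        have h2x : (2 : ℤ) ∣ x := by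
          refine Int.prime_two.dvd_of_dvd_pow (n := m) ⟨2 * c ^ 2 + 2 * c + 1, ?_⟩
          rw [hxm, hc]; ring
        obtain ⟨d, hd⟩ := h2x
        have h4 : (4 : ℤ) ∣ x ^ m := by
          have hsplit : x ^ m = x ^ 2 * x ^ (m - 2) := by
            rw [← pow_add]; congr 1; omega
          exact ⟨d ^ 2 * x ^ (m - 2), by rw [hsplit, hd]; ring⟩
        obtain ⟨k, hk⟩ := h4
        have : y ^ 2 + 1 = 4 * (c ^ 2 + c) + 2 := by rw [hc]; ring
        rw [hxm, this] at hk
        set w := c ^ 2 + c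
        omega
    obtain ⟨c, hc⟩ := hyeven
    -- Gaussian integer setup
    set α : ℤ[i] := ⟨y, 1⟩ with hα
    set β : ℤ[i] := ⟨y, -1⟩ with hβ
    have hmul : α * β = ((x : ℤ[i])) ^ m := by
      have h1 : α * β = ((⟨y ^ 2 + 1, 0⟩ : ℤ[i])) := by
        ext <;> simp [hα, hβ, Zsqrtd.re_mul, Zsqrtd.im_mul] <;> ring
      have h1' : ((⟨y ^ 2 + 1, 0⟩ : ℤ[i])) = ((y ^ 2 + 1 : ℤ) : ℤ[i]) := by
        ext <;> simp only [Zsqrtd.re_intCast, Zsqrtd.im_intCast]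
      have h2 : ((x : ℤ) : ℤ[i]) ^ m = ((x ^ m : ℤ) : ℤ[i]) := by push_cast; ring
      rw [h1, h1', h2, hxm]
    have hcop : IsCoprime α β := by
      refine ⟨⟨y, 2 * c ^ 2 - 1⟩, ⟨0, -2 * c ^ 2⟩, ?_⟩
      ext <;> simp [hα, hβ, Zsqrtd.re_mul, Zsqrtd.im_mul, hc] <;> ring
    obtain ⟨D, u, hu⟩ := exists_associated_pow_of_mul_eq_pow' hcop hmul
    -- every unit of ℤ[i] has fourth power 1
    have hu4 : u ^ 4 = 1 := by
      have hn1 : Zsqrtd.norm (u : ℤ[i]) = 1 :=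
        (Zsqrtd.norm_eq_one_iff' (by norm_num) _).mpr u.isUnit
      rw [Zsqrtd.norm_def] at hn1
      have hsq : (u : ℤ[i]).re ^ 2 + (u : ℤ[i]).im ^ 2 = 1 := by linear_combination hn1
      have hzero : (u : ℤ[i]).re = 0 ∨ (u : ℤ[i]).im = 0 := by
        have hps : ((u : ℤ[i]).re.natAbs ^ 2 + (u : ℤ[i]).im.natAbs ^ 2 : ℤ) = 1 := by
          push_cast
          rw [sq_abs, sq_abs]; exact hsq
        have hps' : (u : ℤ[i]).re.natAbs ^ 2 + (u : ℤ[i]).im.natAbs ^ 2 = 1 := by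
          exact_mod_cast hps
        rcases Nat.eq_zero_or_pos (u : ℤ[i]).re.natAbs with h0 | h0
        · exact Or.inl (Int.natAbs_eq_zero.mp h0)
        · right
          have : (u : ℤ[i]).im.natAbs ^ 2 = 0 := by nlinarith
          exact Int.natAbs_eq_zero.mp (by nlinarith [this])
      have h2 : (u : ℤ[i]) ^ 2 = 1 ∨ (u : ℤ[i]) ^ 2 = -1 := by
        rcases hzero with h0 | h0
        · right
          have him : (u : ℤ[i]).im * (u : ℤ[i]).im = 1 := by nlinarith [hsq]
          ext <;> simp [pow_two, Zsqrtd.re_mul, Zsqrtd.im_mul, h0, him]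
        · left
          have hre : (u : ℤ[i]).re * (u : ℤ[i]).re = 1 := by nlinarith [hsq]
          ext <;> simp [pow_two, Zsqrtd.re_mul, Zsqrtd.im_mul, h0, hre]
      refine Units.ext ?_
      have : ((u ^ 4 : ℤ[i]ˣ) : ℤ[i]) = ((u : ℤ[i]) ^ 2) ^ 2 := by
        rw [Units.val_pow_eq_pow_val, ← pow_mul]
      rcases h2 with h2 | h2 <;> simp [this, h2]
    -- absorb the unit into the base
    have hE : ∃ E : ℤ[i], E ^ m = α := by
      refine ⟨D * ((u ^ m : ℤ[i]ˣ) : ℤ[i]), ?_⟩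
      have huu : (u ^ m) ^ m = u := by
        have h1 : u ^ (m * m) = (u ^ 4) ^ (M * M + M) * u := by
          rw [← pow_mul, ← pow_succ]; congr 1; rw [hM]; ring
        rw [← pow_mul, h1, hu4, one_pow, one_mul]
      have hval : ((u ^ m : ℤ[i]ˣ) : ℤ[i]) ^ m = (u : ℤ[i]) := by
        rw [← Units.val_pow_eq_pow_val, huu]
      rw [mul_pow, hval, hu]
    obtain ⟨E, hE⟩ := hE
    obtain ⟨s, t⟩ := E
    -- conjugate equation
    have hstar : ((⟨s, -t⟩ : ℤ[i])) ^ m = β := by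
      have h1 : ((⟨s, -t⟩ : ℤ[i])) = star (⟨s, t⟩ : ℤ[i]) := by rw [Zsqrtd.star_mk]
      rw [h1, ← star_pow, hE]
      ext <;> simp [hα, hβ, Zsqrtd.re_star, Zsqrtd.im_star]
    -- t = ±1
    have htpm : t = 1 ∨ t = -1 := by
      have hdvd : ((⟨0, 2 * t⟩ : ℤ[i])) ∣ ((⟨0, 2⟩ : ℤ[i])) := by
        have e1 : (⟨s, t⟩ : ℤ[i]) - ⟨s, -t⟩ = (⟨0, 2 * t⟩ : ℤ[i]) := by
          ext <;> simp [Zsqrtd.re_sub, Zsqrtd.im_sub] <;> ring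
        have e2 : α - β = ((⟨0, 2⟩ : ℤ[i])) := by
          ext <;> simp [hα, hβ, Zsqrtd.re_sub, Zsqrtd.im_sub]
        rw [← e1, ← e2, ← hE, ← hstar]
        exact sub_dvd_pow_sub_pow _ _ m
      obtain ⟨w, hw⟩ := hdvd
      have hnw := congrArg Zsqrtd.norm hw
      rw [Zsqrtd.norm_mul] at hnw
      have h1 : Zsqrtd.norm ((⟨0, 2⟩ : ℤ[i])) = 4 := by simp [Zsqrtd.norm_def]
      have h2 : Zsqrtd.norm ((⟨0, 2 * t⟩ : ℤ[i])) = 4 * t ^ 2 := by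
        simp [Zsqrtd.norm_def]; ring
      rw [h1, h2] at hnw
      have h3 : t ^ 2 * Zsqrtd.norm w = 1 := by
        have h4 : (4 : ℤ) * (t ^ 2 * Zsqrtd.norm w) = 4 * 1 := by linarith [hnw]; 
        exact mul_left_cancel₀ (by norm_num) h4
      have h5 : t ^ 2 = 1 := Int.eq_one_of_mul_eq_one_right (sq_nonneg t) h3
      have h6 : (t - 1) * (t + 1) = 0 := by linear_combination h5
      rcases mul_eq_zero.mp h6 with h7 | h7
      · left; linarith
      · right; linarith
    -- norm equation
    have hnormpow : ∀ (z : ℤ[i]) (k : ℕ), Zsqrtd.norm (z ^ k) = (Zsqrtd.norm z) ^ k := by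
      intro z k
      induction k with
      | zero => simp
      | succ k ih => rw [pow_succ, pow_succ, Zsqrtd.norm_mul, ih]
    have hnormE : (s ^ 2 + t ^ 2) ^ m = y ^ 2 + 1 := by
      have h1 := congrArg Zsqrtd.norm hE
      rw [hnormpow] at h1
      have h2 : Zsqrtd.norm ((⟨s, t⟩ : ℤ[i])) = s ^ 2 + t ^ 2 := by
        rw [Zsqrtd.norm_def]; ring
      have h3 : Zsqrtd.norm α = y ^ 2 + 1 := by
        rw [hα, Zsqrtd.norm_def]; ring
      rw [h2, h3] at h1
      exact h1
    have ht2 : t ^ 2 = 1 := by rcases htpm with h | h <;> rw [h] <;> ring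
    -- s is even
    have hseven : (2 : ℤ) ∣ s := by
      rcases Int.even_or_odd s with ⟨d, hd⟩ | ⟨d, hd⟩
      · exact ⟨d, by omega⟩
      · exfalso
        have h1 : (2 : ℤ) ∣ (s ^ 2 + t ^ 2) ^ m :=
          dvd_pow ⟨2 * d ^ 2 + 2 * d + 1, by rw [hd, ht2]; ring⟩ (by omega)
        rw [hnormE, hc] at h1
        obtain ⟨k, hk⟩ := h1
        have : 4 * c ^ 2 + 1 = 2 * k := by linarith [hk]
        set w := c ^ 2
        omega
    -- s ≠ 0
    have hsne : s ≠ 0 := by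
      intro hs0
      subst hs0
      have htt : t * t = 1 := by linear_combination ht2
      have hE2 : ((⟨0, t⟩ : ℤ[i])) ^ 2 = -1 := by
        have e1 : ((⟨0, t⟩ : ℤ[i])) ^ 2 = ⟨-(t * t), 0⟩ := by
          ext <;> simp [pow_two, Zsqrtd.re_mul, Zsqrtd.im_mul] <;> ring
        rw [e1, htt]
        ext <;> simp
      have h1 : ((⟨0, t⟩ : ℤ[i])) ^ m = ((-1 : ℤ[i])) ^ M * ⟨0, t⟩ := by
        rw [hM, pow_succ, pow_mul, hE2]
      have h2 : α.re = 0 := by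
        rw [← hE, h1, Zsqrtd.re_mul, LebesgueAux.neg_one_pow_re, LebesgueAux.neg_one_pow_im]
        simp
      rw [hα] at h2
      exact hy (by simpa using h2)
    -- imaginary part of (s + i)^m equals t
    have himst : (((⟨s, 1⟩ : ℤ[i])) ^ m).im = t := by
      rcases htpm with h | h <;> subst h
      · rw [hE, hα]
      · have h1 : ((⟨s, 1⟩ : ℤ[i])) = ⟨s, -(-1)⟩ := by ext <;> simp
        rw [h1, hstar, hβ]
    -- final contradiction via 2-adic valuations
    obtain ⟨M', rfl⟩ : ∃ M', M = M' + 1 := ⟨M - 1, by omega⟩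
    set n : ℕ := s.natAbs with hn
    have hn0 : n ≠ 0 := Int.natAbs_ne_zero.mpr hsne
    have hn2 : 2 ∣ n := by
      have := Int.natAbs_dvd_natAbs.mpr hseven
      simpa using this
    have hC2 : m.choose 2 ≠ 0 := (Nat.choose_pos (by omega)).ne'
    set v : ℕ := (m.choose 2 * n ^ 2).factorization 2 with hv
    have hexp := LebesgueAux.im_pow_expand s (M' + 1)
    rw [← hM] at hexp
    have hsum : (∑ j ∈ Finset.range M',
          (-1 : ℤ) ^ (M' + 1 + (j + 1 + 1)) * ((m.choose (2 * (j + 1 + 1)) : ℕ) : ℤ)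
            * s ^ (2 * (j + 1 + 1)))
        + (-1 : ℤ) ^ (M' + 1 + (0 + 1)) * ((m.choose (2 * (0 + 1)) : ℕ) : ℤ) * s ^ (2 * (0 + 1))
        + (-1 : ℤ) ^ (M' + 1 + 0) * ((m.choose (2 * 0) : ℕ) : ℤ) * s ^ (2 * 0) = t := by
      rw [← himst, hexp, Finset.sum_range_succ', Finset.sum_range_succ']
    have h4s : (4 : ℤ) ∣ s ^ 2 := by
      obtain ⟨s', rfl⟩ := hseven
      exact ⟨s' ^ 2, by ring⟩
    have hdvd4 : (4 : ℤ) ∣ (t - (-1 : ℤ) ^ (M' + 1 + 0)) := by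
      have heq : t - (-1 : ℤ) ^ (M' + 1 + 0) = (∑ j ∈ Finset.range M',
          (-1 : ℤ) ^ (M' + 1 + (j + 1 + 1)) * ((m.choose (2 * (j + 1 + 1)) : ℕ) : ℤ)
            * s ^ (2 * (j + 1 + 1)))
          + (-1 : ℤ) ^ (M' + 1 + (0 + 1)) * ((m.choose (2 * (0 + 1)) : ℕ) : ℤ)
            * s ^ (2 * (0 + 1)) := by
        have h1 : ((m.choose (2 * 0) : ℕ) : ℤ) = 1 := by norm_num
        rw [← hsum, h1]
        ring
      rw [heq]
      refine dvd_add (Finset.dvd_sum fun j hj => ?_) ?_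
      · exact Dvd.dvd.mul_left (dvd_trans h4s (pow_dvd_pow s (by omega))) _
      · exact Dvd.dvd.mul_left (dvd_trans h4s (pow_dvd_pow s (by omega))) _
    have hteps : t = (-1 : ℤ) ^ (M' + 1 + 0) := by
      have hepm : (-1 : ℤ) ^ (M' + 1 + 0) = 1 ∨ (-1 : ℤ) ^ (M' + 1 + 0) = -1 := by
        rcases Nat.even_or_odd (M' + 1 + 0) with hp | hp
        · exact Or.inl hp.neg_one_pow
        · exact Or.inr hp.neg_one_pow
      obtain ⟨k, hk⟩ := hdvd4
      exact LebesgueAux.pm_eq _ _ _ htpm hepm hk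
    have hzero : (∑ j ∈ Finset.range M',
          (-1 : ℤ) ^ (M' + 1 + (j + 1 + 1)) * ((m.choose (2 * (j + 1 + 1)) : ℕ) : ℤ)
            * s ^ (2 * (j + 1 + 1)))
        + (-1 : ℤ) ^ (M' + 1 + (0 + 1)) * ((m.choose (2 * (0 + 1)) : ℕ) : ℤ)
          * s ^ (2 * (0 + 1)) = 0 := by
      have h1 : ((m.choose (2 * 0) : ℕ) : ℤ) = 1 := by norm_num
      rw [← hteps] at hsum
      rw [h1] at hsum
      have h3 : t * 1 * s ^ (2 * 0) = t := by ring
      linarith [hsum, h3]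
    -- each term of the remaining sum is divisible by 2 ^ (v + 1)
    have hcastpow : ∀ K : ℕ, s ^ (2 * K) = ((n : ℤ)) ^ (2 * K) := by
      intro K
      rw [pow_mul, pow_mul, hn, Int.natAbs_sq]
    have hdvdsum : ((2 : ℤ)) ^ (v + 1) ∣ (∑ j ∈ Finset.range M',
        (-1 : ℤ) ^ (M' + 1 + (j + 1 + 1)) * ((m.choose (2 * (j + 1 + 1)) : ℕ) : ℤ)
          * s ^ (2 * (j + 1 + 1))) := by
      refine Finset.dvd_sum fun j hj => ?_
      have hjM : j < M' := Finset.mem_range.mp hj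
      have hnat : 2 ^ (v + 1) ∣ m.choose (2 * (j + 1 + 1)) * n ^ (2 * (j + 1 + 1)) :=
        LebesgueAux.val_term m (M' + 1) hM (by omega) n hn2 hn0 (j + 1 + 1) (by omega) (by omega)
      have hint : ((2 : ℤ)) ^ (v + 1) ∣ ((m.choose (2 * (j + 1 + 1)) : ℕ) : ℤ)
          * s ^ (2 * (j + 1 + 1)) := by
        have := Int.natCast_dvd_natCast.mpr hnat
        push_cast at this
        rwa [← hcastpow] at this
      have hshape : (-1 : ℤ) ^ (M' + 1 + (j + 1 + 1)) * ((m.choose (2 * (j + 1 + 1)) : ℕ) : ℤ)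
            * s ^ (2 * (j + 1 + 1))
          = (-1 : ℤ) ^ (M' + 1 + (j + 1 + 1)) * (((m.choose (2 * (j + 1 + 1)) : ℕ) : ℤ)
            * s ^ (2 * (j + 1 + 1))) := by ring
      rw [hshape]
      exact Dvd.dvd.mul_left hint _
    have hdvdCs : ((2 : ℤ)) ^ (v + 1) ∣ ((m.choose 2 : ℕ) : ℤ) * s ^ 2 := by
      have h1 : ((2 : ℤ)) ^ (v + 1) ∣ (-1 : ℤ) ^ (M' + 1 + (0 + 1))
          * ((m.choose (2 * (0 + 1)) : ℕ) : ℤ) * s ^ (2 * (0 + 1)) := by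
        have h2 : (-1 : ℤ) ^ (M' + 1 + (0 + 1)) * ((m.choose (2 * (0 + 1)) : ℕ) : ℤ)
            * s ^ (2 * (0 + 1)) = -(∑ j ∈ Finset.range M',
            (-1 : ℤ) ^ (M' + 1 + (j + 1 + 1)) * ((m.choose (2 * (j + 1 + 1)) : ℕ) : ℤ)
              * s ^ (2 * (j + 1 + 1))) := by linarith [hzero]
        rw [h2]
        exact dvd_neg.mpr hdvdsum
      have hepm : (-1 : ℤ) ^ (M' + 1 + (0 + 1)) = 1 ∨ (-1 : ℤ) ^ (M' + 1 + (0 + 1)) = -1 := by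
        rcases Nat.even_or_odd (M' + 1 + (0 + 1)) with hp | hp
        · exact Or.inl hp.neg_one_pow
        · exact Or.inr hp.neg_one_pow
      have h2k : (2 : ℕ) * (0 + 1) = 2 := by norm_num
      rcases hepm with h' | h'
      · have h3 : ((m.choose 2 : ℕ) : ℤ) * s ^ 2 = (-1 : ℤ) ^ (M' + 1 + (0 + 1))
            * ((m.choose (2 * (0 + 1)) : ℕ) : ℤ) * s ^ (2 * (0 + 1)) := by
          rw [h', h2k]; ring
        rw [h3]; exact h1
      · have h3 : ((m.choose 2 : ℕ) : ℤ) * s ^ 2 = -((-1 : ℤ) ^ (M' + 1 + (0 + 1))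
            * ((m.choose (2 * (0 + 1)) : ℕ) : ℤ) * s ^ (2 * (0 + 1))) := by
          rw [h', h2k]; ring
        rw [h3]; exact dvd_neg.mpr h1
    have hdvdnat : 2 ^ (v + 1) ∣ m.choose 2 * n ^ 2 := by
      have hcast : ((m.choose 2 : ℕ) : ℤ) * s ^ 2 = ((m.choose 2 * n ^ 2 : ℕ) : ℤ) := by
        push_cast
        rw [hn, Int.natAbs_sq]
      rw [hcast] at hdvdCs
      exact_mod_cast hdvdCs
    rw [Nat.Prime.pow_dvd_iff_le_factorization Nat.prime_two
      (mul_ne_zero hC2 (pow_ne_zero _ hn0))] at hdvdnat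
    omega
end

section
/- Let D be a positive integer that is not a perfect square, and let x, y be positive integers with x^2 − D·y^2 = 1 such that every prime dividing y also divides D. Then for all positive integers x', y' with x'^2 − D·y'^2 = 1 one has y ≤ y'; that is, (x, y) is the fundamental solution of the Pell equation X^2 − D·Y^2 = 1. -/
open Zsqrtd Finset

lemma Stoermer.im_dvd_im_pow {d : ℤ} (z : ℤ√d) (n : ℕ) : z.im ∣ (z ^ n).im := by
  induction n with
  | zero => simp
  | succ n ih =>
    rw [pow_succ, Zsqrtd.im_mul]
    exact dvd_add (dvd_mul_left _ _) (ih.mul_right _)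

lemma Stoermer.sqrtd_pow_im {d : ℤ} (m : ℕ) :
    ((sqrtd : ℤ√d) ^ (2 * m)).im = 0 ∧ ((sqrtd : ℤ√d) ^ (2 * m + 1)).im = d ^ m := by
  induction m with
  | zero => simp
  | succ m ih =>
    have h2 : (sqrtd : ℤ√d) ^ 2 = (d : ℤ√d) := by
      rw [sq, Zsqrtd.dmuld]
    constructor
    · have : 2 * (m + 1) = 2 * m + 2 := by ring
      rw [this, pow_add, h2, Zsqrtd.im_mul, Zsqrtd.im_intCast, Zsqrtd.re_intCast, ih.1]
      ring
    · have : 2 * (m + 1) + 1 = (2 * m + 1) + 2 := by ring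
      rw [this, pow_add, h2, Zsqrtd.im_mul, Zsqrtd.im_intCast, Zsqrtd.re_intCast, ih.2]
      ring

lemma Stoermer.pow_im_eq_sum {d : ℤ} (A B : ℤ) (n : ℕ) :
    ((⟨A, B⟩ : ℤ√d) ^ n).im
      = ∑ k ∈ range (n + 1),
          (n.choose k : ℤ) * A ^ (n - k) * B ^ k * ((sqrtd : ℤ√d) ^ k).im := by
  have hz : (⟨A, B⟩ : ℤ√d) = (B : ℤ√d) * sqrtd + (A : ℤ√d) := by
    ext <;> simp
  rw [hz, add_pow]
  have him : ∀ (s : Finset ℕ) (f : ℕ → ℤ√d), (∑ k ∈ s, f k).im = ∑ k ∈ s, (f k).im := by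
    intro s f
    induction s using Finset.induction with
    | empty => simp
    | insert _ _ h ih => rw [Finset.sum_insert h, Zsqrtd.im_add, ih, Finset.sum_insert h]
  rw [him]
  refine Finset.sum_congr rfl fun k hk => ?_
  have : ((B : ℤ√d) * sqrtd) ^ k * (A : ℤ√d) ^ (n - k) * (n.choose k : ℤ√d)
      = ((((n.choose k : ℤ) * A ^ (n - k) * B ^ k : ℤ)) : ℤ√d) * (sqrtd ^ k) := by
    push_cast
    ring
  rw [this, Zsqrtd.im_smul]

lemma Stoermer.key {d : ℤ} (hd : 0 < d) {A B : ℤ} (hA : 1 < A) (hB : 0 < B)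
    (hAB : A ^ 2 - d * B ^ 2 = 1) (p : ℕ) (hp : p.Prime)
    (hall : ∀ q : ℕ, q.Prime → (q : ℤ) ∣ ((⟨A, B⟩ : ℤ√d) ^ p).im → (q : ℤ) ∣ d) : False := by
  -- no prime dividing d can divide A
  have notA : ∀ q : ℕ, q.Prime → (q : ℤ) ∣ d → ¬ (q : ℤ) ∣ A := by
    intro q hq hqd hqA
    have h1 : (q : ℤ) ∣ 1 := by
      have := dvd_sub (dvd_pow hqA two_ne_zero) (hqd.mul_right (B ^ 2))
      rwa [hAB] at this
    have := Int.le_of_dvd one_pos h1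
    have := hq.two_le
    omega
  -- helper to extract a prime factor of an integer > 1
  have getprime : ∀ c : ℤ, 1 < c → ∃ q : ℕ, q.Prime ∧ (q : ℤ) ∣ c := by
    intro c hc
    have h1 : c.natAbs ≠ 1 := by omega
    obtain ⟨q, hq, hqc⟩ := Nat.exists_prime_and_dvd h1
    exact ⟨q, hq, (Int.natCast_dvd_natCast.mpr hqc).trans (Int.natAbs_dvd.mpr dvd_rfl)⟩
  rcases eq_or_ne p 2 with rfl | hp2
  · -- p = 2 : the imaginary part is 2AB, divisible by A, whose prime factors divide d
    have h2 : ((⟨A, B⟩ : ℤ√d) ^ 2).im = A * B + B * A := by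
      rw [sq, Zsqrtd.im_mul]
    obtain ⟨q, hq, hqA⟩ := getprime A hA
    have hqd : (q : ℤ) ∣ d := by
      apply hall q hq
      rw [h2]
      exact dvd_add (hqA.mul_right _) (hqA.mul_left _)
    exact notA q hq hqd hqA
  rcases eq_or_ne p 3 with rfl | hp3
  · -- p = 3 : imaginary part is B * (2A-1) * (2A+1)
    have h3 : ((⟨A, B⟩ : ℤ√d) ^ 3).im = B * ((2 * A - 1) * (2 * A + 1)) := by
      have hcube : (⟨A, B⟩ : ℤ√d) ^ 3 = ⟨A, B⟩ * ⟨A, B⟩ * ⟨A, B⟩ := by ring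
      rw [hcube, Zsqrtd.im_mul, Zsqrtd.im_mul, Zsqrtd.re_mul]
      simp only
      linear_combination (-B) * hAB
    have key3 : ∀ c : ℤ, c ∣ (2 * A - 1) * (2 * A + 1) → 1 < c → (3 : ℤ) ∣ c := by
      intro c hcdvd hc1
      obtain ⟨q, hq, hqc⟩ := getprime c hc1
      have hqprod : (q : ℤ) ∣ (2 * A - 1) * (2 * A + 1) := hqc.trans hcdvd
      have hqd : (q : ℤ) ∣ d := by
        apply hall q hq
        rw [h3]
        exact hqprod.mul_left _
      -- q divides A^2 - 1 (since d ∣ d B^2 = A^2 - 1) and 4A^2 - 1, hence 3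
      have h4 : (q : ℤ) ∣ A ^ 2 - 1 := by
        have : (q : ℤ) ∣ d * B ^ 2 := hqd.mul_right _
        have heq : d * B ^ 2 = A ^ 2 - 1 := by linarith
        rwa [heq] at this
      have hq3 : (q : ℤ) ∣ 3 := by
        have : (q : ℤ) ∣ (2 * A - 1) * (2 * A + 1) - 4 * (A ^ 2 - 1) := dvd_sub hqprod (h4.mul_left 4)
        have heq : (2 * A - 1) * (2 * A + 1) - 4 * (A ^ 2 - 1) = 3 := by ring
        rwa [heq] at this
      have hq3' : q ∣ 3 := by exact_mod_cast hq3
      have : q = 3 := (Nat.prime_dvd_prime_iff_eq hq Nat.prime_three).mp hq3'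
      subst this
      exact_mod_cast hqc
    have ha1 : (3 : ℤ) ∣ 2 * A - 1 := key3 _ (dvd_mul_right _ _) (by omega)
    have ha2 : (3 : ℤ) ∣ 2 * A + 1 := key3 _ (dvd_mul_left _ _) (by omega)
    have : (3 : ℤ) ∣ 2 := by
      have := dvd_sub ha2 ha1
      have heq : 2 * A + 1 - (2 * A - 1) = 2 := by ring
      rwa [heq] at this
    omega
  -- now p ≥ 5
  have hp5 : 5 ≤ p := by
    have h2 := hp.two_le
    by_contra hlt
    push_neg at hlt
    interval_cases p
    · exact hp2 rfl
    · exact hp3 rfl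
    · norm_num at hp
  set Y : ℤ := ((⟨A, B⟩ : ℤ√d) ^ p).im with hYdef
  set S : ℤ := ∑ k ∈ Ico 2 (p + 1),
      (p.choose k : ℤ) * A ^ (p - k) * B ^ (k - 1) * ((sqrtd : ℤ√d) ^ k).im with hSdef
  -- Y = p A^(p-1) B + B S
  have hY : Y = (p : ℤ) * A ^ (p - 1) * B + B * S := by
    rw [hYdef, Stoermer.pow_im_eq_sum, Finset.range_eq_Ico,
      Finset.sum_eq_sum_Ico_succ_bot (by omega)
        (fun k => (p.choose k : ℤ) * A ^ (p - k) * B ^ k * ((sqrtd : ℤ√d) ^ k).im),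
      Finset.sum_eq_sum_Ico_succ_bot (by omega)
        (fun k => (p.choose k : ℤ) * A ^ (p - k) * B ^ k * ((sqrtd : ℤ√d) ^ k).im)]
    have h0 : (p.choose 0 : ℤ) * A ^ (p - 0) * B ^ 0 * ((sqrtd : ℤ√d) ^ 0).im = 0 := by simp
    have h1 : (p.choose 1 : ℤ) * A ^ (p - 1) * B ^ 1 * ((sqrtd : ℤ√d) ^ 1).im
        = (p : ℤ) * A ^ (p - 1) * B := by
      simp [Nat.choose_one_right]
    rw [h0, h1, hSdef, Finset.mul_sum]
    rw [zero_add]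
    congr 1
    refine Finset.sum_congr rfl fun k hk => ?_
    have hk2 : 2 ≤ k := (Finset.mem_Ico.mp hk).1
    have hBk : B ^ k = B * B ^ (k - 1) := by
      rw [← pow_succ']
      congr 1
      omega
    rw [hBk]; ring
  -- S is nonneg
  have hs_nonneg : ∀ k : ℕ, 0 ≤ ((sqrtd : ℤ√d) ^ k).im := by
    intro k
    rcases Nat.even_or_odd k with ⟨m, hm⟩ | ⟨m, hm⟩
    · have : k = 2 * m := by omega
      rw [this, (Stoermer.sqrtd_pow_im m).1]
    · rw [hm, (Stoermer.sqrtd_pow_im m).2]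
      positivity
  have hS_nonneg : 0 ≤ S := by
    rw [hSdef]
    refine Finset.sum_nonneg fun k hk => ?_
    have := hs_nonneg k
    positivity
  -- d divides each sqrtd^k im for k ≥ 2
  have hs_dvd : ∀ k : ℕ, 2 ≤ k → d ∣ ((sqrtd : ℤ√d) ^ k).im := by
    intro k hk
    rcases Nat.even_or_odd k with ⟨m, hm⟩ | ⟨m, hm⟩
    · have : k = 2 * m := by omega
      rw [this, (Stoermer.sqrtd_pow_im m).1]
      exact dvd_zero _
    · rw [hm, (Stoermer.sqrtd_pow_im m).2]
      exact dvd_pow_self d (by omega)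
  have hdS : d ∣ S := by
    rw [hSdef]
    exact Finset.dvd_sum fun k hk => (hs_dvd k (Finset.mem_Ico.mp hk).1).mul_left _
  -- if p ∣ d then p^2 ∣ S
  have hp2S : (p : ℤ) ∣ d → ((p : ℤ) ^ 2) ∣ S := by
    intro hpd
    rw [hSdef]
    refine Finset.dvd_sum fun k hk => ?_
    obtain ⟨hk2, hkp⟩ := Finset.mem_Ico.mp hk
    rcases Nat.even_or_odd k with ⟨m, hm⟩ | ⟨m, hm⟩
    · have : k = 2 * m := by omega
      rw [this, (Stoermer.sqrtd_pow_im m).1, mul_zero]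
      exact dvd_zero _
    · subst hm
      rw [(Stoermer.sqrtd_pow_im m).2]
      rcases eq_or_lt_of_le (show 2 * m + 1 ≤ p by omega) with hkeq | hklt
    -- impossible? k = p case
      · -- k = p : m = (p-1)/2 ≥ 2, so p^2 ∣ d^2 ∣ d^m
        have hm2 : 2 ≤ m := by omega
        have h1 : ((p : ℤ) ^ 2) ∣ d ^ 2 := pow_dvd_pow_of_dvd hpd 2
        have h2 : d ^ 2 ∣ d ^ m := pow_dvd_pow d hm2
        exact ((h1.trans h2).mul_left _)
      · -- k < p : p ∣ choose and p ∣ d ∣ d^m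
        have hC : (p : ℤ) ∣ (p.choose (2 * m + 1) : ℤ) := by
          exact_mod_cast Nat.Prime.dvd_choose_self hp (by omega) (by omega)
        have hdm : (p : ℤ) ∣ d ^ m := hpd.trans (dvd_pow_self d (by omega))
        have heq : (p.choose (2 * m + 1) : ℤ) * A ^ (p - (2 * m + 1)) * B ^ (2 * m + 1 - 1) * d ^ m
            = ((p.choose (2 * m + 1) : ℤ) * d ^ m) * (A ^ (p - (2 * m + 1)) * B ^ (2 * m + 1 - 1)) := by ring
        rw [heq, sq]
        exact (mul_dvd_mul hC hdm).mul_right _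
  -- Q
  set Q : ℤ := (p : ℤ) * A ^ (p - 1) + S with hQdef
  have hYQ : Y = B * Q := by rw [hY, hQdef]; ring
  have hApow : (16 : ℤ) ≤ A ^ (p - 1) := by
    calc (16 : ℤ) = 2 ^ 4 := by norm_num
    _ ≤ 2 ^ (p - 1) := pow_le_pow_right₀ (by norm_num) (by omega)
    _ ≤ A ^ (p - 1) := pow_le_pow_left₀ (by norm_num) (by omega) _
  have hQbig : 16 * (p : ℤ) ≤ Q := by
    have hp0 : (0 : ℤ) < p := by exact_mod_cast hp.pos
    nlinarith
  -- every prime dividing Q equals p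
  have hqQ : ∀ q : ℕ, q.Prime → (q : ℤ) ∣ Q → q = p := by
    intro q hq hqQ'
    have hqY : (q : ℤ) ∣ Y := by rw [hYQ]; exact hqQ'.mul_left _
    have hqd : (q : ℤ) ∣ d := hall q hq hqY
    have hqS : (q : ℤ) ∣ S := hqd.trans hdS
    have hqpA : (q : ℤ) ∣ (p : ℤ) * A ^ (p - 1) := by
      have := dvd_sub hqQ' hqS
      have heq : Q - S = (p : ℤ) * A ^ (p - 1) := by rw [hQdef]; ring
      rwa [heq] at this
    have hqprime : Prime (q : ℤ) := Nat.prime_iff_prime_int.mp hq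
    rcases hqprime.dvd_mul.mp hqpA with h | h
    · have : q ∣ p := by exact_mod_cast h
      exact (Nat.prime_dvd_prime_iff_eq hq hp).mp this
    · exact absurd (hqprime.dvd_of_dvd_pow h) (notA q hq hqd)
  -- p ∣ Q
  obtain ⟨q0, hq0, hq0Q⟩ := getprime Q (by nlinarith [hp.pos])
  have hpQ : (p : ℤ) ∣ Q := by
    rw [← hqQ q0 hq0 hq0Q]
    exact hq0Q
  have hpd : (p : ℤ) ∣ d := by
    refine hall p hp ?_
    rw [hYQ]
    exact hpQ.mul_left _
  -- Q / p > 1, get p^2 ∣ Q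
  obtain ⟨Q', hQ'⟩ := hpQ
  have hp0 : (0 : ℤ) < (p : ℤ) := by exact_mod_cast hp.pos
  have hQ'1 : 1 < Q' := by nlinarith
  obtain ⟨q1, hq1, hq1Q'⟩ := getprime Q' hQ'1
  have hq1p : q1 = p := hqQ q1 hq1 (by rw [hQ']; exact hq1Q'.mul_left _)
  have hpQ2 : (p : ℤ) ∣ Q' := by rw [← hq1p]; exact hq1Q'
  have hp2Q : ((p : ℤ) ^ 2) ∣ Q := by
    obtain ⟨c, hc⟩ := hpQ2
    exact ⟨c, by rw [hQ', hc]; ring⟩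
  -- p^2 ∣ p A^(p-1) → p ∣ A : contradiction
  have hp2pA : ((p : ℤ) ^ 2) ∣ (p : ℤ) * A ^ (p - 1) := by
    have := dvd_sub hp2Q (hp2S hpd)
    have heq : Q - S = (p : ℤ) * A ^ (p - 1) := by rw [hQdef]; ring
    rwa [heq] at this
  have hpA : (p : ℤ) ∣ A ^ (p - 1) := by
    obtain ⟨c, hc⟩ := hp2pA
    refine ⟨c, ?_⟩
    have : (p : ℤ) * A ^ (p - 1) = (p : ℤ) * ((p : ℤ) * c) := by rw [hc]; ring
    exact mul_left_cancel₀ (by positivity) this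
  exact notA p hp hpd ((Nat.prime_iff_prime_int.mp hp).dvd_of_dvd_pow hpA)

lemma Stoermer.pow_xy {d : ℤ} (a : Pell.Solution₁ d) (n : ℕ) :
    (a ^ n).x = ((⟨a.x, a.y⟩ : ℤ√d) ^ n).re ∧ (a ^ n).y = ((⟨a.x, a.y⟩ : ℤ√d) ^ n).im := by
  induction n with
  | zero => simp [Pell.Solution₁.x_one, Pell.Solution₁.y_one]
  | succ n ih =>
    rw [pow_succ, pow_succ, Pell.Solution₁.x_mul, Pell.Solution₁.y_mul,
      Zsqrtd.re_mul, Zsqrtd.im_mul, ih.1, ih.2]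
    constructor <;> simp <;> ring

/-- Stoermer's lemma (1898): if `D` is a positive nonsquare integer and `(x, y)` is a
positive solution of the Pell equation `x ^ 2 - D y ^ 2 = 1` such that every prime dividing
`y` also divides `D`, then `(x, y)` is the fundamental solution, i.e. `y` is minimal among
positive solutions. -/
theorem stoermer_lemma (D : ℤ) (hD : 0 < D) (hDsq : ¬ ∃ k : ℤ, D = k ^ 2)
    (x y : ℤ) (hx : 0 < x) (hy : 0 < y) (hxy : x ^ 2 - D * y ^ 2 = 1)
    (hst : ∀ p : ℕ, p.Prime → (p : ℤ) ∣ y → (p : ℤ) ∣ D) :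
    ∀ x' y' : ℤ, 0 < x' → 0 < y' → x' ^ 2 - D * y' ^ 2 = 1 → y ≤ y' := by
  intro x' y' hx' hy' hxy'
  have hns : ¬ IsSquare D := by
    rintro ⟨r, hr⟩
    exact hDsq ⟨r, by rw [hr]; ring⟩
  obtain ⟨a₁, ha₁⟩ := Pell.IsFundamental.exists_of_not_isSquare hD hns
  set s : Pell.Solution₁ D := Pell.Solution₁.mk x y hxy with hsdef
  have hsx : s.x = x := Pell.Solution₁.x_mk x y hxy
  have hsy : s.y = y := Pell.Solution₁.y_mk x y hxy
  obtain ⟨n, hn⟩ := ha₁.eq_pow_of_nonneg (by rw [hsx]; exact hx) (by rw [hsy]; exact hy.le)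
  have hn0 : n ≠ 0 := by
    rintro rfl
    rw [pow_zero] at hn
    have := congrArg Pell.Solution₁.y hn
    rw [hsy, Pell.Solution₁.y_one] at this
    exact hy.ne' this
  have hn1 : n = 1 := by
    by_contra hne
    have hp : n.minFac.Prime := Nat.minFac_prime hne
    have hpn : n.minFac ∣ n := n.minFac_dvd
    refine Stoermer.key hD ha₁.1 ha₁.2.1 a₁.prop n.minFac hp ?_
    intro q hq hdvd
    refine hst q hq ?_
    obtain ⟨m, hm⟩ := hpn
    have h1 : ((⟨a₁.x, a₁.y⟩ : ℤ√D) ^ n.minFac).im ∣ ((⟨a₁.x, a₁.y⟩ : ℤ√D) ^ n).im := by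
      conv_rhs => rw [hm, pow_mul]
      exact Stoermer.im_dvd_im_pow _ m
    have h2 : ((⟨a₁.x, a₁.y⟩ : ℤ√D) ^ n).im = y := by
      rw [← (Stoermer.pow_xy a₁ n).2, ← hn, hsy]
    exact hdvd.trans (h2 ▸ h1)
  have hy1 : a₁.y = y := by
    rw [hn1, pow_one] at hn
    rw [← hn]
    exact hsy
  have h1x' : 1 < x' := by nlinarith
  have := ha₁.y_le_y (a := Pell.Solution₁.mk x' y' hxy')
    (by rw [Pell.Solution₁.x_mk]; exact h1x') (by rw [Pell.Solution₁.y_mk]; exact hy')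
  rwa [hy1, Pell.Solution₁.y_mk] at this
end

section
/- Let q ≥ 3 be a prime number and let x, y be positive integers with x^2 − y^q = 1. Then y is even and q divides x. -/
open Pell in
lemma pell_xn_odd {A : ℕ} (a1 : 1 < A) (hA : Odd A) : ∀ n, Odd (xn a1 n) := by
  intro n
  induction n using Nat.twoStepInduction with
  | zero => simpa using odd_one
  | one => simpa using hA
  | more n ih1 ih2 =>
    have h2 : xn a1 (n + 2) + xn a1 n = 2 * (A * xn a1 (n + 1)) := by
      rw [Pell.xn_succ_succ]; ring
    obtain ⟨c, hc⟩ := ih1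
    refine ⟨A * xn a1 (n + 1) - c - 1, ?_⟩
    generalize A * xn a1 (n + 1) = t at h2 ⊢
    omega

open Pell in
lemma pell_two_pow_dvd {A : ℕ} (a1 : 1 < A) (hA : Odd A) :
    ∀ k n, 2 ^ k ∣ yn a1 n → 2 ^ k ∣ n := by
  intro k
  induction k with
  | zero => simp
  | succ k ih =>
    intro n hdvd
    have h2yn : 2 ∣ yn a1 n := dvd_trans (dvd_pow_self 2 (Nat.succ_ne_zero k)) hdvd
    have h2n : 2 ∣ n := by
      have := (Pell.yn_modEq_two a1 n).symm.trans (Nat.modEq_zero_iff_dvd.mpr h2yn)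
      exact Nat.modEq_zero_iff_dvd.mp this
    obtain ⟨n', rfl⟩ := h2n
    have hyd : yn a1 (2 * n') = 2 * (xn a1 n' * yn a1 n') := by
      rw [two_mul, Pell.yn_add]; ring
    rw [hyd, pow_succ'] at hdvd
    have hk : 2 ^ k ∣ xn a1 n' * yn a1 n' :=
      (Nat.mul_dvd_mul_iff_left (by norm_num : 0 < 2)).mp hdvd
    have hcop : Nat.Coprime (2 ^ k) (xn a1 n') :=
      Nat.Coprime.pow_left k ((pell_xn_odd a1 hA n').coprime_two_left)
    have : 2 ^ k ∣ yn a1 n' := hcop.dvd_of_dvd_mul_left hk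
    rw [pow_succ']
    exact mul_dvd_mul_left 2 (ih n' this)

open Pell in
lemma pell_yn_ge {A : ℕ} (a1 : 1 < A) : ∀ n, A ^ n ≤ yn a1 (n + 1) := by
  intro n
  induction n with
  | zero => simp
  | succ n ih =>
    have h : yn a1 (n + 2) = xn a1 (n + 1) + yn a1 (n + 1) * A := Pell.yn_succ a1 (n + 1)
    calc A ^ (n + 1) = A ^ n * A := by ring
    _ ≤ yn a1 (n + 1) * A := Nat.mul_le_mul_right A ih
    _ ≤ yn a1 (n + 2) := by omega

/-- Nagell's lemma (1921): if `q ≥ 3` is prime and `x, y` are positive integers with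
`x ^ 2 - y ^ q = 1`, then `y` is even and `q` divides `x`. -/
theorem nagell_lemma (q : ℕ) (hq : q.Prime) (hq3 : 3 ≤ q) (x y : ℤ)
    (hx : 0 < x) (hy : 0 < y) (h : x ^ 2 - y ^ q = 1) :
    2 ∣ y ∧ (q : ℤ) ∣ x := by
  have hqodd : Odd q := hq.odd_of_ne_two (by omega)
  obtain ⟨m, hm⟩ := hqodd
  have hqodd : Odd q := ⟨m, hm⟩
  have hm1 : 1 ≤ m := by omega
  -- Part 1 : y is even
  have h2y : 2 ∣ y := by
    by_contra hodd
    have hyodd : Odd y := Int.odd_iff.mpr (by omega)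
    have hxev : Even x := by
      have h1 : Even (x ^ 2) := by
        have hx2 : x ^ 2 = y ^ q + 1 := by linarith
        rw [hx2]; exact Odd.add_one (hyodd.pow)
      exact (Int.even_pow.mp h1).1
    have hx2 : 2 ≤ x := by obtain ⟨t, rfl⟩ := hxev; omega
    have hfac : (x - 1) * (x + 1) = y ^ q := by linear_combination h
    have hcop : IsCoprime (x - 1) (x + 1) := by
      rw [Int.isCoprime_iff_gcd_eq_one]
      have hg2 : (Int.gcd (x - 1) (x + 1) : ℤ) ∣ 2 := by
        have := dvd_sub (Int.gcd_dvd_right (a := x - 1) (b := x + 1)) (Int.gcd_dvd_left (a := x - 1) (b := x + 1))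
        simpa using this
      have hg2' : Int.gcd (x - 1) (x + 1) ∣ 2 := by exact_mod_cast hg2
      rcases Nat.prime_two.eq_one_or_self_of_dvd _ hg2' with h1 | h2
      · exact h1
      · exfalso
        have hd1 := Int.gcd_dvd_left (a := x - 1) (b := x + 1)
        rw [h2] at hd1
        have hd1' : (2 : ℤ) ∣ x - 1 := by exact_mod_cast hd1
        obtain ⟨t, rfl⟩ := hxev
        omega
    obtain ⟨⟨A, hA⟩, ⟨B, hB⟩⟩ := Int.eq_pow_of_mul_eq_pow_odd hcop hqodd hfac
    obtain ⟨r, hr⟩ : ∃ r, q = r + 3 := ⟨q - 3, by omega⟩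
    have hApos : 1 ≤ A := by
      by_contra hA0
      push_neg at hA0
      have := hqodd.pow_nonpos (by linarith : A ≤ 0)
      linarith
    have hAq : 1 ≤ A ^ q := by linarith
    have hBq : B ^ q = A ^ q + 2 := by linarith
    have hBpos : 0 < B := by
      by_contra hB0
      push_neg at hB0
      have := hqodd.pow_nonpos hB0
      linarith
    have hAB : A + 1 ≤ B := by
      by_contra hBA
      push_neg at hBA
      have : B ^ q ≤ A ^ q := pow_le_pow_left₀ hBpos.le (by linarith) q
      linarith
    have e1 : A ^ (r + 2) ≤ B ^ (r + 2) := pow_le_pow_left₀ (by linarith) (by linarith) _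
    have e2 : (2 : ℤ) ^ (r + 2) ≤ B ^ (r + 2) := pow_le_pow_left₀ (by norm_num) (by linarith) _
    have e3 : (4 : ℤ) ≤ 2 ^ (r + 2) := by
      have h1r : (0 : ℤ) < 2 ^ r := pow_pos (by norm_num) r
      calc (4 : ℤ) = 4 * 1 := by norm_num
      _ ≤ 4 * 2 ^ r := by linarith
      _ = 2 ^ (r + 2) := by ring
    have e4 : B ^ q = B ^ (r + 2) * B := by rw [hr]; ring
    have e5 : A ^ q = A ^ (r + 2) * A := by rw [hr]; ring
    have e6 : B ^ (r + 2) * (A + 1) ≤ B ^ (r + 2) * B :=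
      mul_le_mul_of_nonneg_left hAB (by positivity)
    have e7 : A * A ^ (r + 2) ≤ A * B ^ (r + 2) :=
      mul_le_mul_of_nonneg_left e1 (by linarith)
    nlinarith [e4, e5, e6, e7, e2, e3, hBq]
  refine ⟨h2y, ?_⟩
  -- Part 2 : q ∣ x
  by_contra hqx
  set S : ℤ := ∑ i ∈ Finset.range q, (-y) ^ i with hSdef
  have hgeom := geom_sum_mul (-y) q
  rw [hqodd.neg_pow] at hgeom
  have hS : (y + 1) * S = x ^ 2 := by
    rw [hSdef]
    linear_combination (-1 : ℤ) * hgeom - h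
  have hdvdSq : (y + 1) ∣ S - (q : ℤ) := by
    have hsum : S - (q : ℤ) = ∑ i ∈ Finset.range q, ((-y) ^ i - 1) := by
      rw [hSdef, Finset.sum_sub_distrib, Finset.sum_const, Finset.card_range]
      simp
    rw [hsum]
    refine Finset.dvd_sum fun i _ => ?_
    have hdd := sub_dvd_pow_sub_pow (-y) 1 i
    rw [one_pow] at hdd
    have hneg : -(y + 1) ∣ (-y) ^ i - 1 := by
      have : -y - 1 = -(y + 1) := by ring
      rwa [this] at hdd
    exact (neg_dvd).mp hneg
  have hgq : (Int.gcd (y + 1) S : ℤ) ∣ (q : ℤ) := by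
    have h1 : (Int.gcd (y + 1) S : ℤ) ∣ S - (S - (q : ℤ)) :=
      dvd_sub (Int.gcd_dvd_right (a := y + 1) (b := S))
        (dvd_trans (Int.gcd_dvd_left (a := y + 1) (b := S)) hdvdSq)
    simpa using h1
  have hgq' : Int.gcd (y + 1) S ∣ q := by exact_mod_cast hgq
  rcases hq.eq_one_or_self_of_dvd _ hgq' with hg1 | hgQ
  · -- gcd = 1 : y + 1 is a perfect square, Pell contradiction
    have hcop : IsCoprime (y + 1) S := Int.isCoprime_iff_gcd_eq_one.mpr hg1
    obtain ⟨a0, ha0 | ha0⟩ := Int.sq_of_isCoprime hcop hS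
    swap
    · nlinarith [sq_nonneg a0]
    -- move to ℕ
    set Y : ℕ := y.toNat with hYdef
    set X : ℕ := x.toNat with hXdef
    have hYc : (Y : ℤ) = y := Int.toNat_of_nonneg hy.le
    have hXc : (X : ℤ) = x := Int.toNat_of_nonneg hx.le
    have hXY : X ^ 2 = Y ^ q + 1 := by
      have : ((X ^ 2 : ℕ) : ℤ) = ((Y ^ q + 1 : ℕ) : ℤ) := by
        push_cast [hXc, hYc]
        linarith
      exact_mod_cast this
    have hA2 : (a0.natAbs) ^ 2 = Y + 1 := by
      have h1 : ((a0.natAbs ^ 2 : ℕ) : ℤ) = ((Y + 1 : ℕ) : ℤ) := by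
        rw [Nat.cast_pow, Int.natAbs_sq]
        push_cast [hYc]
        linarith
      exact_mod_cast h1
    have hYpos : 2 ≤ Y := by
      have : 2 ≤ y := by
        obtain ⟨c, hc⟩ := h2y
        omega
      omega
    have hYeven : 2 ∣ Y := by
      obtain ⟨c, hc⟩ := h2y
      have : (Y : ℤ) = 2 * c := by rw [hYc, hc]
      exact ⟨c.toNat, by omega⟩
    have hAodd : Odd a0.natAbs := by
      rcases Nat.even_or_odd a0.natAbs with he | ho
      · exfalso
        obtain ⟨s, hs⟩ := he
        have : a0.natAbs ^ 2 = 2 * (s * (s + s)) := by rw [hs]; ring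
        omega
      · exact ho
    obtain ⟨t, ht⟩ := hAodd
    rw [ht] at hA2
    have hYt : Y = 4 * (t * t) + 4 * t := by
      have hexp : (2 * t + 1) ^ 2 = 4 * (t * t) + 4 * t + 1 := by ring
      omega
    have ht1 : 1 ≤ t := by
      rcases Nat.eq_zero_or_pos t with rfl | h1
      · omega
      · exact h1
    have h8Y : 8 ∣ Y := by
      rcases Nat.even_or_odd t with ⟨s, hs⟩ | ⟨s, hs⟩
      · exact ⟨2 * (s * s) + s, by rw [hYt, hs]; ring⟩
      · exact ⟨2 * (s * s) + 3 * s + 1, by rw [hYt, hs]; ring⟩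
    have a1 : 1 < 2 * t + 1 := by omega
    have hpell : X * X - ((2 * t + 1) * (2 * t + 1) - 1) * (Y ^ m) * (Y ^ m) = 1 := by
      have hd : (2 * t + 1) * (2 * t + 1) - 1 = Y := by
        have : (2 * t + 1) * (2 * t + 1) = (2 * t + 1) ^ 2 := by ring
        omega
      rw [hd]
      have h2 : Y * Y ^ m * Y ^ m = Y ^ q := by rw [hm]; ring
      have h3 : X * X = Y ^ q + 1 := by rw [← hXY]; ring
      rw [h2]
      omega
    obtain ⟨n, hxn, hyn⟩ := Pell.eq_pell a1 hpell
    have hAodd' : Odd (2 * t + 1) := ⟨t, by ring⟩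
    have hYmpos : 0 < Y ^ m := pow_pos (by omega) m
    have hn0 : n ≠ 0 := by
      intro h0
      rw [h0, Pell.yn_zero] at hyn
      omega
    have h8m : 2 ^ (3 * m) ∣ Y ^ m := by
      obtain ⟨c, hc⟩ := h8Y
      exact ⟨c ^ m, by rw [hc, pow_mul, ← mul_pow]; norm_num⟩
    have hdn : 2 ^ (3 * m) ∣ n := pell_two_pow_dvd a1 hAodd' (3 * m) n (by rw [← hyn]; exact h8m)
    have hnge : 2 ^ (3 * m) ≤ n := Nat.le_of_dvd (Nat.pos_of_ne_zero hn0) hdn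
    have h3m : 3 * m < 2 ^ (3 * m) := Nat.lt_two_pow_self
    have hqn : q + 1 ≤ n := by omega
    obtain ⟨n0, rfl⟩ : ∃ n0, n = n0 + 1 := ⟨n - 1, by omega⟩
    have hup : (2 * t + 1) ^ n0 ≤ Pell.yn a1 (n0 + 1) := pell_yn_ge a1 n0
    have u1 : Y ^ m < ((2 * t + 1) ^ 2) ^ m :=
      Nat.pow_lt_pow_left (by omega) (by omega)
    have u2 : ((2 * t + 1) ^ 2) ^ m = (2 * t + 1) ^ (2 * m) := by
      rw [← pow_mul]
    have u3 : (2 * t + 1) ^ (2 * m) < (2 * t + 1) ^ (2 * m + 1) :=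
      Nat.pow_lt_pow_right (by omega) (by omega)
    have u4 : (2 * t + 1) ^ (2 * m + 1) ≤ (2 * t + 1) ^ n0 :=
      Nat.pow_le_pow_right (by omega) (by omega)
    omega
  · -- gcd = q : then q ∣ y + 1 hence q ∣ x, contradiction
    have hq_dvd_y1 : (q : ℤ) ∣ y + 1 := by
      have := Int.gcd_dvd_left (a := y + 1) (b := S)
      rwa [hgQ] at this
    have hy1x : (y + 1) ∣ x ^ 2 := ⟨S, hS.symm⟩
    exact hqx (Int.Prime.dvd_pow' hq (dvd_trans hq_dvd_y1 hy1x))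
end

section
/- Let x and y be coprime integers and n ≥ 1 an integer. Then gcd(x − y, ∑_{i=0}^{n−1} x^{n−1−i}·y^i) = gcd(x − y, n); and if moreover n is odd, then gcd(x + y, ∑_{i=0}^{n−1} (−1)^i·x^{n−1−i}·y^i) = gcd(x + y, n). -/
private lemma gcd_congr (a b c : ℤ) (h : a ∣ b - c) : Int.gcd a b = Int.gcd a c := by
  apply Nat.dvd_antisymm
  · apply Int.natCast_dvd_natCast.mp
    apply Int.dvd_coe_gcd (Int.gcd_dvd_left _ _)
    have : (Int.gcd a b : ℤ) ∣ b - c := dvd_trans (Int.gcd_dvd_left _ _) h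
    have h2 : (Int.gcd a b : ℤ) ∣ b := Int.gcd_dvd_right _ _
    simpa using dvd_sub h2 this
  · apply Int.natCast_dvd_natCast.mp
    apply Int.dvd_coe_gcd (Int.gcd_dvd_left _ _)
    have : (Int.gcd a c : ℤ) ∣ b - c := dvd_trans (Int.gcd_dvd_left _ _) h
    have h2 : (Int.gcd a c : ℤ) ∣ c := Int.gcd_dvd_right _ _
    simpa using dvd_add this h2

private lemma gcd_mul_cancel (a m b : ℤ) (h : IsCoprime a b) :
    Int.gcd a (m * b) = Int.gcd a m := by
  have hc : Nat.Coprime a.natAbs b.natAbs := Int.isCoprime_iff_gcd_eq_one.mp h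
  have : Int.gcd a (m * b) = Nat.gcd a.natAbs (m.natAbs * b.natAbs) := by
    rw [Int.gcd, Int.natAbs_mul]
  rw [this, Nat.Coprime.gcd_mul_right_cancel_right _ hc.symm]
  rfl

/-- The "Petit Lemme": for coprime integers `x, y` and `n ≥ 1`,
`gcd (x - y) ((x^n - y^n)/(x - y)) = gcd (x - y) n`, and if `n` is odd,
`gcd (x + y) ((x^n + y^n)/(x + y)) = gcd (x + y) n`, where the quotients are written
as the corresponding sums. -/
theorem petit_lemme (x y : ℤ) (hxy : IsCoprime x y) (n : ℕ) (hn : 1 ≤ n) :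
    Int.gcd (x - y) (∑ i ∈ Finset.range n, x ^ (n - 1 - i) * y ^ i) =
      Int.gcd (x - y) (n : ℤ) ∧
    (Odd n →
      Int.gcd (x + y) (∑ i ∈ Finset.range n, (-1) ^ i * x ^ (n - 1 - i) * y ^ i) =
        Int.gcd (x + y) (n : ℤ)) := by
  constructor
  · -- minus case
    have hcop : IsCoprime (x - y) x := by
      have : IsCoprime (-y) x := (hxy.symm.neg_left)
      have := this.add_mul_left_left 1
      simpa [sub_eq_add_neg, add_comm] using this
    have hstep : Int.gcd (x - y) (∑ i ∈ Finset.range n, x ^ (n - 1 - i) * y ^ i)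
        = Int.gcd (x - y) ((n : ℤ) * x ^ (n - 1)) := by
      apply gcd_congr
      have : (∑ i ∈ Finset.range n, x ^ (n - 1 - i) * y ^ i) - (n : ℤ) * x ^ (n - 1)
          = ∑ i ∈ Finset.range n, x ^ (n - 1 - i) * (y ^ i - x ^ i) := by
        simp only [mul_sub]
        rw [Finset.sum_sub_distrib]
        congr 1
        have e : ∀ i ∈ Finset.range n, x ^ (n - 1 - i) * x ^ i = x ^ (n - 1) := by
          intro i hi
          rw [← pow_add]
          congr 1
          have := Finset.mem_range.mp hi
          omega
        rw [Finset.sum_congr rfl e, Finset.sum_const, Finset.card_range, nsmul_eq_mul]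
      rw [this]
      apply Finset.dvd_sum
      intro i _
      exact Dvd.dvd.mul_left (dvd_sub_comm.mp (sub_dvd_pow_sub_pow x y i)) _
    rw [hstep, gcd_mul_cancel _ _ _ (hcop.pow_right)]
  · intro hodd
    have hcop : IsCoprime (x + y) x := by
      have : IsCoprime y x := hxy.symm
      have := this.add_mul_left_left 1
      simpa [add_comm] using this
    have hstep : Int.gcd (x + y) (∑ i ∈ Finset.range n, (-1) ^ i * x ^ (n - 1 - i) * y ^ i)
        = Int.gcd (x + y) ((n : ℤ) * x ^ (n - 1)) := by
      apply gcd_congr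
      have key : (∑ i ∈ Finset.range n, (-1 : ℤ) ^ i * x ^ (n - 1 - i) * y ^ i)
            - (n : ℤ) * x ^ (n - 1)
          = ∑ i ∈ Finset.range n, (-1) ^ i * x ^ (n - 1 - i) * (y ^ i - (-x) ^ i) := by
        simp only [mul_sub]
        rw [Finset.sum_sub_distrib]
        congr 1
        have e : ∀ i ∈ Finset.range n, (-1 : ℤ) ^ i * x ^ (n - 1 - i) * (-x) ^ i
            = x ^ (n - 1) := by
          intro i hi
          have hle := Finset.mem_range.mp hi
          have h1 : ((-1:ℤ) ^ i) * ((-1:ℤ) ^ i) = 1 := by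
            rw [← pow_add, ← two_mul, pow_mul]; norm_num
          have h2 : x ^ (n - 1 - i) * x ^ i = x ^ (n - 1) := by
            rw [← pow_add]; congr 1; omega
          calc (-1:ℤ) ^ i * x ^ (n - 1 - i) * (-x) ^ i
              = ((-1) ^ i * (-1) ^ i) * (x ^ (n - 1 - i) * x ^ i) := by
                rw [neg_pow]; ring
            _ = x ^ (n - 1) := by rw [h1, h2, one_mul]
        rw [Finset.sum_congr rfl e, Finset.sum_const, Finset.card_range, nsmul_eq_mul]
      rw [key]
      apply Finset.dvd_sum
      intro i _
      have : (y - (-x)) ∣ y ^ i - (-x) ^ i := sub_dvd_pow_sub_pow y (-x) i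
      have h2 : (x + y) ∣ y ^ i - (-x) ^ i := by
        have e : y - (-x) = x + y := by ring
        rwa [e] at this
      exact Dvd.dvd.mul_left h2 _
    rw [hstep, gcd_mul_cancel _ _ _ (hcop.pow_right)]
end

section
/- Let p be an odd prime, let K = ℚ(ζ_p) be the p-th cyclotomic field with ring of integers O_K = ℤ[ζ_p], let ζ be a primitive p-th root of unity in O_K, and let σ be the ℚ-algebra automorphism of K with σ(ζ) = ζ^{-1} (complex conjugation). Then for every unit u of O_K there exist a natural number k and a unit u₀ of O_K fixed by σ such that u = ζ^k · u₀. -/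
open NumberField

/-!
If `K` is CM, then for a unit `u` the quotient `η = u / ū` is a root of unity, so for odd `p`
it is `± ζ ^ r`. Since `ζ` generates `𝓞 K` and `ζ̄ = ζ⁻¹ ≡ ζ` modulo `ζ - 1`, conjugation acts
trivially on `𝓞 K ⧸ (ζ - 1)`, so `η ≡ 1`; this rules out `-ζ ^ r` because `ζ - 1` does not
divide `2`. Finally `ζ ^ r` has the square root `ζ ^ k` with `2k ≡ r (mod p)`, and
`u₀ = ζ⁻ᵏ u` is real.
-/

theorem sub_dvd_map_sub_self_of_mem_adjoin {R : Type*} [CommRing R] (τ : R →+* R) {ζ x : R}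
    (hx : x ∈ Algebra.adjoin ℤ {ζ}) : τ ζ - ζ ∣ τ x - x := by
  induction hx using Algebra.adjoin_induction with
  | mem y hy => rw [Set.mem_singleton_iff.mp hy]
  | algebraMap n => simp
  | add y z _ _ hy hz => simpa only [map_add, add_sub_add_comm] using dvd_add hy hz
  | mul y z _ _ hy hz =>
    rw [show τ (y * z) - y * z = τ y * (τ z - z) + (τ y - y) * z by rw [map_mul]; ring]
    exact dvd_add (dvd_mul_of_dvd_right hz _) (dvd_mul_of_dvd_left hy _)

theorem exists_eq_pow_mul_fixed_of_eq_pow_mul_map {G : Type*} [CommGroup G] (τ : G →* G)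
    {ζ : G} {n : ℕ} (hn : Odd n) (hζ : ζ ^ n = 1) (hτ : τ ζ = ζ⁻¹) {u : G} {r : ℕ}
    (hu : u = ζ ^ r * τ u) : ∃ (k : ℕ) (u₀ : G), τ u₀ = u₀ ∧ u = ζ ^ k * u₀ := by
  obtain ⟨m, rfl⟩ := hn
  have hsq : ζ ^ (r * (m + 1)) * ζ ^ (r * (m + 1)) = ζ ^ r := by
    rw [← pow_add, show r * (m + 1) + r * (m + 1) = (2 * m + 1) * r + r by ring, pow_add,
      pow_mul, hζ, one_pow, one_mul]
  refine ⟨r * (m + 1), (ζ ^ (r * (m + 1)))⁻¹ * u, ?_, by group⟩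
  rw [map_mul, map_inv, map_pow, hτ, inv_pow, inv_inv]
  conv_rhs => rw [hu, ← hsq]
  group

namespace NumberField.IsCMField

variable {K : Type*} [Field K] [NumberField K] [IsCMField K]

theorem algEquiv_eq_complexConj_of_apply_eq_inv {n : ℕ} [NeZero n]
    [IsCyclotomicExtension {n} ℚ K] {ζ : (𝓞 K)ˣ} (hζ : IsPrimitiveRoot ζ n) {σ : K ≃ₐ[ℚ] K}
    (hσ : σ ((ζ : 𝓞 K) : K) = ((ζ : 𝓞 K) : K)⁻¹) : σ = (complexConj K).restrictScalars ℚ := by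
  have hζK : IsPrimitiveRoot ((ζ : 𝓞 K) : K) n :=
    (IsPrimitiveRoot.coe_units_iff.mpr hζ).map_of_injective RingOfIntegers.coe_injective
  apply AlgEquiv.coe_toAlgHom_injective
  refine AlgHom.ext_of_adjoin_eq_top (IsCyclotomicExtension.adjoin_primitive_root_eq_top hζK) ?_
  rintro _ rfl
  simpa [hσ] using (complexConj_torsion K ⟨ζ, hζ.isOfFinOrder (NeZero.ne n)⟩).symm

end NumberField.IsCMField

namespace IsCyclotomicExtension.Rat

variable {K : Type*} [Field K] [NumberField K] {p : ℕ} [Fact p.Prime]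
  [IsCyclotomicExtension {p} ℚ K]

theorem eq_pow_of_isOfFinOrder_of_sub_one_dvd (hp : 2 < p) {ζ x : (𝓞 K)ˣ}
    (hζ : IsPrimitiveRoot ζ p) (hx : IsOfFinOrder x) (hdvd : (ζ : 𝓞 K) - 1 ∣ x - 1) :
    ∃ r : ℕ, x = ζ ^ r := by
  have hζK : IsPrimitiveRoot ((ζ : 𝓞 K) : K) p :=
    (IsPrimitiveRoot.coe_units_iff.mpr hζ).map_of_injective RingOfIntegers.coe_injective
  have hxK : IsOfFinOrder ((x : 𝓞 K) : K) :=
    ((algebraMap (𝓞 K) K : 𝓞 K →* K).comp (Units.coeHom (𝓞 K))).isOfFinOrder hx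
  have hpodd : Odd p := (Fact.out : p.Prime).odd_of_ne_two hp.ne'
  obtain ⟨r, -, hr | hr⟩ := hζK.exists_pow_or_neg_mul_pow_of_isOfFinOrder hpodd hxK
  · exact ⟨r, Units.ext (RingOfIntegers.coe_injective (by simpa using hr))⟩
  · refine absurd ?_ (two_not_mem_span_zeta_sub_one' p hζK hp)
    have hx' : (x : 𝓞 K) = -ζ ^ r := RingOfIntegers.coe_injective (by simpa using hr)
    have h2 : (ζ : 𝓞 K) - 1 ∣ 2 * ζ ^ r := by
      have := dvd_sub (sub_one_dvd_pow_sub_one (ζ : 𝓞 K) r) hdvd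
      rwa [hx', show (ζ : 𝓞 K) ^ r - 1 - (-ζ ^ r - 1) = 2 * ζ ^ r by ring] at this
    exact Ideal.mem_span_singleton.mpr ((Units.dvd_mul_right (u := ζ ^ r)).mp (by simpa using h2))

open IsCMField in
theorem exists_eq_pow_mul_unitsComplexConj [IsCMField K] (hp : 2 < p) {ζ : (𝓞 K)ˣ}
    (hζ : IsPrimitiveRoot ζ p) (u : (𝓞 K)ˣ) : ∃ r : ℕ, u = ζ ^ r * unitsComplexConj K u := by
  have hζK : IsPrimitiveRoot ((ζ : 𝓞 K) : K) p :=
    (IsPrimitiveRoot.coe_units_iff.mpr hζ).map_of_injective RingOfIntegers.coe_injective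
  have hgen : Algebra.adjoin ℤ {(ζ : 𝓞 K)} = ⊤ := by
    simpa [hζK.integralPowerBasis_gen] using hζK.integralPowerBasis.adjoin_gen_eq_top
  have hconjζ : unitsComplexConj K ζ = ζ⁻¹ :=
    unitsComplexConj_torsion K ⟨ζ, hζ.isOfFinOrder (NeZero.ne p)⟩
  have hdvd : (ζ : 𝓞 K) - 1 ∣ unitsComplexConj K u - u := by
    refine dvd_trans ?_ (sub_dvd_map_sub_self_of_mem_adjoin
      (ringOfIntegersComplexConj K : 𝓞 K →+* 𝓞 K) (hgen ▸ Algebra.mem_top : (u : 𝓞 K) ∈ _))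
    change _ ∣ ((unitsComplexConj K ζ : (𝓞 K)ˣ) : 𝓞 K) - ζ
    rw [hconjζ]
    exact ⟨-(1 + ζ) * ↑ζ⁻¹, by linear_combination (ζ : 𝓞 K) * ζ.inv_mul⟩
  have hη : (ζ : 𝓞 K) - 1 ∣ ((unitsMulComplexConjInv K u : (𝓞 K)ˣ) : 𝓞 K) - 1 := by
    set v := unitsComplexConj K u
    have hval : ((u * v⁻¹ : (𝓞 K)ˣ) : 𝓞 K) - 1 = -((v : 𝓞 K) - u) * ↑v⁻¹ := by
      push_cast
      linear_combination v.mul_inv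
    rw [unitsMulComplexConjInv_apply, hval]
    exact dvd_mul_of_dvd_left (dvd_neg.mpr hdvd) _
  obtain ⟨r, hr⟩ := eq_pow_of_isOfFinOrder_of_sub_one_dvd hp hζ
    (unitsMulComplexConjInv K u).prop hη
  exact ⟨r, by rw [← hr, unitsMulComplexConjInv_apply, inv_mul_cancel_right]⟩

end IsCyclotomicExtension.Rat

open IsCMField IsCyclotomicExtension.Rat in
/-- Kummer's lemma on units: let `p` be an odd prime, `K = ℚ(ζ_p)` the `p`-th cyclotomic
field, `ζ` a primitive `p`-th root of unity in the ring of integers `𝓞 K`, and `σ` the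
`ℚ`-algebra automorphism of `K` with `σ ζ = ζ⁻¹` (complex conjugation). Then every unit
`u` of `𝓞 K` can be written `u = ζ ^ k * u₀` with `u₀` a unit fixed by `σ`. -/
theorem kummer_units_lemma (p : ℕ+) (hp : (p : ℕ).Prime) (hpodd : Odd (p : ℕ))
    (K : Type*) [Field K] [NumberField K] [IsCyclotomicExtension {(p : ℕ)} ℚ K]
    (ζ : 𝓞 K) (hζ : IsPrimitiveRoot ζ (p : ℕ))
    (σ : K ≃ₐ[ℚ] K)
    (hσ : σ (algebraMap (𝓞 K) K ζ) = (algebraMap (𝓞 K) K ζ)⁻¹)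
    (u : (𝓞 K)ˣ) :
    ∃ (k : ℕ) (u₀ : (𝓞 K)ˣ),
      σ (algebraMap (𝓞 K) K (u₀ : 𝓞 K)) = algebraMap (𝓞 K) K (u₀ : 𝓞 K) ∧
      (u : 𝓞 K) = ζ ^ k * (u₀ : 𝓞 K) := by
  have : Fact (p : ℕ).Prime := ⟨hp⟩
  have hp2 : 2 < (p : ℕ) := by
    have := hp.two_le
    have := Nat.odd_iff.mp hpodd
    omega
  have : IsCMField K := isCMField K ⟨p, Set.mem_singleton _, hp2⟩
  set z : (𝓞 K)ˣ := (hζ.isUnit p.ne_zero).unit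
  have hz : IsPrimitiveRoot z p := IsPrimitiveRoot.coe_units_iff.mp hζ
  have hσ_eq := algEquiv_eq_complexConj_of_apply_eq_inv hz hσ
  obtain ⟨r, hr⟩ := exists_eq_pow_mul_unitsComplexConj hp2 hz u
  obtain ⟨k, u₀, hu₀, rfl⟩ := exists_eq_pow_mul_fixed_of_eq_pow_mul_map
    (unitsComplexConj K : (𝓞 K)ˣ →* (𝓞 K)ˣ) hpodd hz.pow_eq_one
    (unitsComplexConj_torsion K ⟨z, hz.isOfFinOrder p.ne_zero⟩) hr
  refine ⟨k, u₀, ?_, by simp [z]⟩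
  rw [hσ_eq]
  exact congrArg (fun v : (𝓞 K)ˣ ↦ ((v : 𝓞 K) : K)) hu₀
end
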